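/- arXiv:1011.1724 — 5 statements merged into one kernel-verified Lean document; each statement's English description precedes it below -/
import Mathlib

section
/- Let γ ≠ 0 be real and (σ_N) a sequence of reals with σ_N > −1, σ_N ≠ 0, and N·σ_N → γ as N → ∞. Let i_N be any integers with 0 ≤ i_N ≤ N−1 and set x_N = i_N/N. Then lim_{N→∞} [1 − (1 − (1+σ_N)^{−i_N})/(1 − (1+σ_N)^{−N})] / [(s(1) − s(x_N))/s(1)] = 1, where s(x) = (1 − e^{−γx})/γ. -/
open Filter

/-- The scale function `s(x) = (1 − e^{−γx})/γ` for `γ ≠ 0`. -/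
noncomputable def scaleFn (γ x : ℝ) : ℝ := (1 - Real.exp (-(γ * x))) / γ

lemma expG_pos {u : ℝ} (hu : u ≠ 0) : 0 < (Real.exp u - 1) / u := by
  rcases lt_or_gt_of_ne hu with h | h
  · apply div_pos_of_neg_of_neg _ h
    have h1 : 1 < Real.exp (-u) := by linarith [Real.add_one_lt_exp (neg_ne_zero.mpr hu)]
    have h2 := Real.exp_pos u
    have h3 : Real.exp u * Real.exp (-u) = 1 := by rw [← Real.exp_add]; simp
    nlinarith
  · exact div_pos (by linarith [Real.add_one_lt_exp hu]) h

lemma integral_exp_mul' (u : ℝ) (hu : u ≠ 0) :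
    ∫ t in (0:ℝ)..1, Real.exp (u * t) = (Real.exp u - 1) / u := by
  rw [intervalIntegral.integral_comp_mul_left (fun x => Real.exp x) hu]
  simp [integral_exp, Real.exp_zero, smul_eq_mul]
  ring

lemma expG_le {u v : ℝ} (hu : u ≠ 0) (hv : v ≠ 0) :
    (Real.exp u - 1) / u ≤ Real.exp |u - v| * ((Real.exp v - 1) / v) := by
  rw [← integral_exp_mul' u hu, ← integral_exp_mul' v hv, ← intervalIntegral.integral_const_mul]
  apply intervalIntegral.integral_mono_on zero_le_one
  · exact (Real.continuous_exp.comp (continuous_const.mul continuous_id)).intervalIntegrable _ _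
  · exact (continuous_const.mul
      (Real.continuous_exp.comp (continuous_const.mul continuous_id))).intervalIntegrable _ _
  · intro t ht
    rcases ht with ⟨ht0, ht1⟩
    have h1 : Real.exp (u*t) = Real.exp ((u - v) * t) * Real.exp (v*t) := by
      rw [← Real.exp_add]; ring_nf
    rw [h1]
    have h2 : (u - v) * t ≤ |u - v| := by
      calc (u - v) * t ≤ |u - v| * t := mul_le_mul_of_nonneg_right (le_abs_self _) ht0
      _ ≤ |u - v| * 1 := mul_le_mul_of_nonneg_left ht1 (abs_nonneg _)
      _ = |u - v| := mul_one _
    exact mul_le_mul_of_nonneg_right (Real.exp_le_exp.mpr h2) (Real.exp_pos _).le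

lemma one_sub_exp_neg_pos {t : ℝ} (h : 0 < t) : 0 < 1 - Real.exp (-t) := by
  have h1 : Real.exp (-t) < Real.exp 0 := Real.exp_lt_exp.mpr (by linarith)
  rw [Real.exp_zero] at h1; linarith

lemma one_sub_exp_neg_neg {t : ℝ} (h : t < 0) : 1 - Real.exp (-t) < 0 := by
  have h1 : Real.exp 0 < Real.exp (-t) := Real.exp_lt_exp.mpr (by linarith)
  rw [Real.exp_zero] at h1; linarith

lemma div_ratio_helper {E F p q : ℝ} (hp : p ≠ 0) (hq : q ≠ 0) (hF : F ≠ 0) :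
    E / F = (p / q) * ((E / p) / (F / q)) := by
  field_simp

lemma div_ratio_helper2 {a b E F A B : ℝ} (hA : A ≠ 0) (hB : B ≠ 0) (hF : F ≠ 0) (hb : b ≠ 0) :
    (a * E / A) / (b * F / B) = (a / b) * (E / F) * (B / A) := by
  field_simp
  try ring
  try exact Or.inl trivial

/-- local limit theorem at 1: if `N σ_N → γ ≠ 0` and `0 ≤ i_N ≤ N−1`, then
the ratio of the loss probability `1 − (1 − (1+σ_N)^{−i_N})/(1 − (1+σ_N)^{−N})` to
`(s(1) − s(x_N))/s(1)` tends to `1`, where `x_N = i_N/N`. -/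
theorem moran_fixation_local_limit_at_one
    (γ : ℝ) (hγ : γ ≠ 0) (σ : ℕ → ℝ)
    (hσ1 : ∀ N, σ N > -1) (hσ2 : ∀ N, σ N ≠ 0)
    (hσγ : Tendsto (fun N : ℕ => (N : ℝ) * σ N) atTop (nhds γ))
    (i : ℕ → ℕ) (hi : ∀ N, i N ≤ N - 1) :
    Tendsto (fun N : ℕ =>
        (1 - (1 - (1 + σ N) ^ (-(i N : ℤ))) / (1 - (1 + σ N) ^ (-(N : ℤ))))
          / ((scaleFn γ 1 - scaleFn γ ((i N : ℝ) / N)) / scaleFn γ 1))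
      atTop (nhds 1) := by
  have h1σ : ∀ N, (0:ℝ) < 1 + σ N := fun N => by linarith [hσ1 N]
  set c : ℕ → ℝ := fun N => (N : ℝ) * Real.log (1 + σ N) with hc_def
  -- σ → 0
  have hσ0 : Tendsto σ atTop (nhds 0) := by
    have h := hσγ.mul tendsto_inv_atTop_nhds_zero_nat
    rw [mul_zero] at h
    apply h.congr'
    filter_upwards [eventually_ge_atTop 1] with N hN
    have hN' : (N:ℝ) ≠ 0 := Nat.cast_ne_zero.mpr (by omega)
    field_simp
  have hslope : Tendsto (fun N => Real.log (1 + σ N) / σ N) atTop (nhds 1) := by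
    have hd : HasDerivAt Real.log 1 1 := by simpa using Real.hasDerivAt_log one_ne_zero
    have h2 := hasDerivAt_iff_tendsto_slope.mp hd
    have h3 : Tendsto (fun N => 1 + σ N) atTop (nhdsWithin 1 {(1:ℝ)}ᶜ) := by
      apply tendsto_nhdsWithin_of_tendsto_nhds_of_eventually_within
      · simpa using tendsto_const_nhds.add hσ0
      · filter_upwards with N
        simp only [Set.mem_compl_iff, Set.mem_singleton_iff]
        intro h; exact hσ2 N (by linarith)
    have h4 := h2.comp h3
    apply h4.congr
    intro N
    simp [Function.comp, slope_def_field, Real.log_one]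
  have hc : Tendsto c atTop (nhds γ) := by
    have h := hσγ.mul hslope
    rw [mul_one] at h
    apply h.congr
    intro N
    simp only [hc_def]
    field_simp [hσ2 N]
  -- limit pieces
  have hA : Tendsto (fun N => Real.exp (γ - c N)) atTop (nhds 1) := by
    have h0 : Tendsto (fun N => γ - c N) atTop (nhds 0) := by
      simpa using ((tendsto_const_nhds (x := γ)).sub hc)
    simpa [Function.comp_def] using (Real.continuous_exp.tendsto 0).comp h0
  have hq : Tendsto (fun N => c N / γ) atTop (nhds 1) := by
    simpa [div_self hγ] using hc.div_const γ
  have hε : Tendsto (fun N => |c N - γ|) atTop (nhds 0) := by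
    simpa using (hc.sub (tendsto_const_nhds (x := γ))).abs
  have hEm : Tendsto (fun N => Real.exp (-|c N - γ|)) atTop (nhds 1) := by
    have h0 : Tendsto (fun N => -|c N - γ|) atTop (nhds 0) := by simpa using hε.neg
    simpa [Function.comp_def] using (Real.continuous_exp.tendsto 0).comp h0
  have hEp : Tendsto (fun N => Real.exp (|c N - γ|)) atTop (nhds 1) := by
    simpa [Function.comp_def] using (Real.continuous_exp.tendsto 0).comp hε
  have hbne : 1 - Real.exp (-γ) ≠ 0 := by
    have : Real.exp (-γ) ≠ 1 := by simp [Real.exp_eq_one_iff, hγ]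
    exact sub_ne_zero.mpr (Ne.symm this)
  have hT : Tendsto (fun N => (1 - Real.exp (-γ)) / (1 - Real.exp (-(c N)))) atTop (nhds 1) := by
    have hden : Tendsto (fun N => 1 - Real.exp (-(c N))) atTop (nhds (1 - Real.exp (-γ))) :=
      tendsto_const_nhds.sub ((Real.continuous_exp.tendsto _).comp hc.neg)
    have := (tendsto_const_nhds (x := 1 - Real.exp (-γ))).div hden hbne
    simpa [div_self hbne, Pi.div_def] using this
  set low : ℕ → ℝ := fun N => Real.exp (γ - c N) * (c N / γ) * Real.exp (-|c N - γ|) *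
      ((1 - Real.exp (-γ)) / (1 - Real.exp (-(c N)))) with hlow_def
  set up : ℕ → ℝ := fun N => Real.exp (γ - c N) * (c N / γ) * Real.exp (|c N - γ|) *
      ((1 - Real.exp (-γ)) / (1 - Real.exp (-(c N)))) with hup_def
  have hlowT : Tendsto low atTop (nhds 1) := by
    simpa using ((hA.mul hq).mul hEm).mul hT
  have hupT : Tendsto up atTop (nhds 1) := by
    simpa using ((hA.mul hq).mul hEp).mul hT
  have hcev : ∀ᶠ N in atTop, |c N - γ| < |γ| := by
    have := Metric.tendsto_nhds.mp hc |γ| (abs_pos.mpr hγ)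
    simpa [Real.dist_eq] using this
  have key : ∀ᶠ N in atTop,
      low N ≤ (1 - (1 - (1 + σ N) ^ (-(i N : ℤ))) / (1 - (1 + σ N) ^ (-(N : ℤ))))
          / ((scaleFn γ 1 - scaleFn γ ((i N : ℝ) / N)) / scaleFn γ 1) ∧
      (1 - (1 - (1 + σ N) ^ (-(i N : ℤ))) / (1 - (1 + σ N) ^ (-(N : ℤ))))
          / ((scaleFn γ 1 - scaleFn γ ((i N : ℝ) / N)) / scaleFn γ 1) ≤ up N := by
    filter_upwards [eventually_ge_atTop 1, hcev] with N hN hlt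
    have hNR : (0:ℝ) < N := by exact_mod_cast Nat.lt_of_lt_of_le Nat.zero_lt_one hN
    have hNne : (N:ℝ) ≠ 0 := ne_of_gt hNR
    have hpos := h1σ N
    have hlog_ne : Real.log (1 + σ N) ≠ 0 :=
      Real.log_ne_zero_of_pos_of_ne_one hpos (fun h => hσ2 N (by linarith))
    set x : ℝ := (i N : ℝ) / N with hx_def
    have hx0 : 0 ≤ x := by positivity
    have hilt : (i N : ℝ) < N := by
      have h' : i N < N := by have := hi N; omega
      exact_mod_cast h'
    have hx1 : x < 1 := (div_lt_one hNR).mpr hilt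
    set y : ℝ := 1 - x with hy_def
    have hy0 : 0 < y := by rw [hy_def]; linarith
    have hy1 : y ≤ 1 := by rw [hy_def]; linarith
    have hcne : c N ≠ 0 := by
      intro h; rw [h] at hlt; simp at hlt
    have habs := abs_lt.mp hlt
    have hsign : (0 < γ ∧ 0 < c N) ∨ (γ < 0 ∧ c N < 0) := by
      rcases lt_or_gt_of_ne hγ with hg | hg
      · right
        refine ⟨hg, ?_⟩
        have ha : |γ| = -γ := abs_of_neg hg
        rw [ha] at habs; linarith [habs.2]
      · left
        refine ⟨hg, ?_⟩
        have ha : |γ| = γ := abs_of_pos hg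
        rw [ha] at habs; linarith [habs.1]
    have hsame : 0 < c N / γ := by
      rcases hsign with ⟨h1,h2⟩|⟨h1,h2⟩
      · exact div_pos h2 h1
      · exact div_pos_of_neg_of_neg h2 h1
    have hane : 1 - Real.exp (-(c N)) ≠ 0 := by
      have : Real.exp (-(c N)) ≠ 1 := by simp [Real.exp_eq_one_iff, hcne]
      exact sub_ne_zero.mpr (Ne.symm this)
    have hTpos : 0 < (1 - Real.exp (-γ)) / (1 - Real.exp (-(c N))) := by
      rcases hsign with ⟨h1,h2⟩|⟨h1,h2⟩
      · exact div_pos (one_sub_exp_neg_pos h1) (one_sub_exp_neg_pos h2)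
      · exact div_pos_of_neg_of_neg (one_sub_exp_neg_neg h1) (one_sub_exp_neg_neg h2)
    have hu : c N * y ≠ 0 := mul_ne_zero hcne (ne_of_gt hy0)
    have hv : γ * y ≠ 0 := mul_ne_zero hγ (ne_of_gt hy0)
    have huvle : |c N * y - γ * y| ≤ |c N - γ| := by
      have h' : c N * y - γ * y = (c N - γ) * y := by ring
      rw [h', abs_mul, abs_of_pos hy0]
      exact mul_le_of_le_one_right (abs_nonneg _) hy1
    set Gu : ℝ := (Real.exp (c N * y) - 1) / (c N * y) with hGu_def
    set Gv : ℝ := (Real.exp (γ * y) - 1) / (γ * y) with hGv_def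
    have hGu := expG_pos hu
    have hGv := expG_pos hv
    have hub : Gu / Gv ≤ Real.exp (|c N - γ|) := by
      rw [div_le_iff₀ hGv]
      calc Gu ≤ Real.exp (|c N * y - γ * y|) * Gv := expG_le hu hv
        _ ≤ Real.exp (|c N - γ|) * Gv :=
          mul_le_mul_of_nonneg_right (Real.exp_le_exp.mpr huvle) hGv.le
    have hlb : Real.exp (-|c N - γ|) ≤ Gu / Gv := by
      rw [le_div_iff₀ hGv]
      have h5 : Gv ≤ Real.exp (|c N - γ|) * Gu := by
        calc Gv ≤ Real.exp (|γ * y - c N * y|) * Gu := expG_le hv hu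
          _ ≤ Real.exp (|c N - γ|) * Gu := by
            apply mul_le_mul_of_nonneg_right _ hGu.le
            apply Real.exp_le_exp.mpr
            rwa [abs_sub_comm]
      calc Real.exp (-|c N - γ|) * Gv ≤ Real.exp (-|c N - γ|) * (Real.exp (|c N - γ|) * Gu) :=
          mul_le_mul_of_nonneg_left h5 (Real.exp_pos _).le
        _ = Gu := by rw [← mul_assoc, ← Real.exp_add]; simp
    -- rewrite the main expression
    have hpow : ∀ m : ℕ, (1 + σ N) ^ (-(m : ℤ)) = Real.exp (-((m:ℝ) * Real.log (1 + σ N))) := by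
      intro m
      have h' : (1 + σ N) ^ (m:ℕ) = Real.exp (Real.log (1 + σ N) * m) := by
        rw [← Real.rpow_natCast, Real.rpow_def_of_pos hpos]
      rw [zpow_neg, zpow_natCast, h', ← Real.exp_neg]
      congr 1; ring
    have hcx : c N * x = (i N : ℝ) * Real.log (1 + σ N) := by
      simp only [hc_def, hx_def]
      field_simp
    have hAeq : (1 + σ N) ^ (-(i N : ℤ)) = Real.exp (-(c N)) * Real.exp (c N * y) := by
      rw [hpow (i N), ← hcx, ← Real.exp_add]
      congr 1; rw [hy_def]; ring
    have hBeq : (1 + σ N) ^ (-(N : ℤ)) = Real.exp (-(c N)) := by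
      rw [hpow N]
    have hsplitγ : Real.exp (-(γ * x)) = Real.exp (-γ) * Real.exp (γ * y) := by
      rw [← Real.exp_add]; congr 1; rw [hy_def]; ring
    have hFne : Real.exp (γ * y) - 1 ≠ 0 := by
      have : Real.exp (γ * y) ≠ 1 := by simp [Real.exp_eq_one_iff, hv]
      exact sub_ne_zero.mpr this
    have hnum : 1 - (1 - (1 + σ N) ^ (-(i N : ℤ))) / (1 - (1 + σ N) ^ (-(N : ℤ)))
        = Real.exp (-(c N)) * (Real.exp (c N * y) - 1) / (1 - Real.exp (-(c N))) := by
      rw [hAeq, hBeq]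
      field_simp
      ring
    have hden : (scaleFn γ 1 - scaleFn γ x) / scaleFn γ 1
        = Real.exp (-γ) * (Real.exp (γ * y) - 1) / (1 - Real.exp (-γ)) := by
      simp only [scaleFn, mul_one]
      rw [hsplitγ]
      field_simp
      ring
    have hexpsub : Real.exp (γ - c N) = Real.exp (-(c N)) / Real.exp (-γ) := by
      rw [← Real.exp_sub]; congr 1; ring
    have hgoal_eq : (1 - (1 - (1 + σ N) ^ (-(i N : ℤ))) / (1 - (1 + σ N) ^ (-(N : ℤ))))
          / ((scaleFn γ 1 - scaleFn γ x) / scaleFn γ 1)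
        = Real.exp (γ - c N) * ((c N / γ) * (Gu / Gv)) *
          ((1 - Real.exp (-γ)) / (1 - Real.exp (-(c N)))) := by
      have hpq : (c N * y) / (γ * y) = c N / γ :=
        mul_div_mul_right _ _ (ne_of_gt hy0)
      have hQ : (Real.exp (c N * y) - 1) / (Real.exp (γ * y) - 1) = (c N / γ) * (Gu / Gv) := by
        rw [hGu_def, hGv_def, ← hpq]
        exact div_ratio_helper hu hv hFne
      rw [hnum, hden, ← hQ]
      rw [div_ratio_helper2 hane hbne hFne (Real.exp_ne_zero (-γ)), hexpsub]
    rw [hgoal_eq]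
    have hKpos : 0 < Real.exp (γ - c N) * (c N / γ) *
        ((1 - Real.exp (-γ)) / (1 - Real.exp (-(c N)))) :=
      mul_pos (mul_pos (Real.exp_pos _) hsame) hTpos
    constructor
    · calc low N = (Real.exp (γ - c N) * (c N / γ) *
            ((1 - Real.exp (-γ)) / (1 - Real.exp (-(c N))))) * Real.exp (-|c N - γ|) := by
            simp only [hlow_def]; ring
        _ ≤ (Real.exp (γ - c N) * (c N / γ) *
            ((1 - Real.exp (-γ)) / (1 - Real.exp (-(c N))))) * (Gu / Gv) :=
            mul_le_mul_of_nonneg_left hlb hKpos.le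
        _ = Real.exp (γ - c N) * ((c N / γ) * (Gu / Gv)) *
            ((1 - Real.exp (-γ)) / (1 - Real.exp (-(c N)))) := by ring
    · calc Real.exp (γ - c N) * ((c N / γ) * (Gu / Gv)) *
            ((1 - Real.exp (-γ)) / (1 - Real.exp (-(c N))))
          = (Real.exp (γ - c N) * (c N / γ) *
            ((1 - Real.exp (-γ)) / (1 - Real.exp (-(c N))))) * (Gu / Gv) := by ring
        _ ≤ (Real.exp (γ - c N) * (c N / γ) *
            ((1 - Real.exp (-γ)) / (1 - Real.exp (-(c N))))) * Real.exp (|c N - γ|) :=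
            mul_le_mul_of_nonneg_left hub hKpos.le
        _ = up N := by simp only [hup_def]; ring
  refine tendsto_of_tendsto_of_tendsto_of_le_of_le' hlowT hupT ?_ ?_
  · filter_upwards [key] with N h; exact h.1
  · filter_upwards [key] with N h; exact h.2
end

section
/- Let γ be real and (σ_N) a sequence of reals with σ_N > −1 and N·σ_N → γ as N → ∞. Let i_N be integers with 0 ≤ i_N ≤ N and i_N/N → x for some x ∈ [0,1]. Then lim_{N→∞} N² · Σ_{j=0}^{N} p_{N,σ_N}(i_N, j) · (j/N − i_N/N) = γ·x·(1−x). If i_N = ⌊Nx⌋, the convergence is uniform in x for 0 ≤ x ≤ 1. -/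
open Filter

/-- The Moran transition function `p_{N,σ}` on `{0,1,…,N}` (zero off `{0,…,N}²` except as
specified): `p(0,0) = p(N,N) = 1`, boundary states are absorbing, and for `0 < i < N`:
`p(i,i+1) = (1+σ)(i/N)(1−i/N)/(1+σ i/N)`, `p(i,i−1) = (i/N)(1−i/N)/(1+σ i/N)`,
`p(i,i) = 1 − p(i,i+1) − p(i,i−1)`. -/
noncomputable def moranP (N : ℕ) (σ : ℝ) (i j : ℕ) : ℝ :=
  if i = 0 ∨ i = N then (if j = i then 1 else 0)
  else if j = i + 1 then
    (1 + σ) * ((i : ℝ) / N) * (1 - (i : ℝ) / N) / (1 + σ * ((i : ℝ) / N))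
  else if j + 1 = i then
    ((i : ℝ) / N) * (1 - (i : ℝ) / N) / (1 + σ * ((i : ℝ) / N))
  else if j = i then
    1 - (1 + σ) * ((i : ℝ) / N) * (1 - (i : ℝ) / N) / (1 + σ * ((i : ℝ) / N))
      - ((i : ℝ) / N) * (1 - (i : ℝ) / N) / (1 + σ * ((i : ℝ) / N))
  else 0

lemma moran_sum_eq (N : ℕ) (hN : 1 ≤ N) (σ : ℝ) (hσ : σ > -1) (i : ℕ) (hi : i ≤ N) :
    (N:ℝ)^2 * ∑ j ∈ Finset.range (N+1), moranP N σ i j * ((j:ℝ)/N - (i:ℝ)/N)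
      = ((N:ℝ)*σ) * (((i:ℝ)/N) * (1 - (i:ℝ)/N) / (1 + σ * ((i:ℝ)/N))) := by
  have hN0 : (N:ℝ) ≠ 0 := Nat.cast_ne_zero.mpr (by omega)
  by_cases hb : i = 0 ∨ i = N
  · have hsum : ∑ j ∈ Finset.range (N+1), moranP N σ i j * ((j:ℝ)/N - (i:ℝ)/N) = 0 := by
      apply Finset.sum_eq_zero
      intro j _
      unfold moranP
      rw [if_pos hb]
      split_ifs with h
      · subst h; ring
      · ring
    rw [hsum]
    rcases hb with h | h
    · subst h; simp
    · subst h; rw [div_self hN0]; ring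
  · push_neg at hb
    obtain ⟨h0, hNe⟩ := hb
    obtain ⟨k, rfl⟩ : ∃ k, i = k + 1 := ⟨i - 1, by omega⟩
    have hkN : k + 2 ≤ N := by omega
    have ht0 : (0:ℝ) < (↑(k+1):ℝ)/N := by positivity
    have ht1 : (↑(k+1):ℝ)/N ≤ 1 := by
      rw [div_le_one (by positivity)]
      exact_mod_cast hi
    have hg : 0 < 1 + σ * ((↑(k+1):ℝ)/N) := by
      nlinarith [mul_pos (show (0:ℝ) < 1+σ by linarith) ht0]
    have hsub : ({k, k+2} : Finset ℕ) ⊆ Finset.range (N+1) := by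
      intro j hj
      simp only [Finset.mem_insert, Finset.mem_singleton] at hj
      simp only [Finset.mem_range]
      omega
    rw [← Finset.sum_subset hsub (by
      intro j _ hj'
      simp only [Finset.mem_insert, Finset.mem_singleton] at hj'
      push_neg at hj'
      by_cases hd : j = k+1
      · subst hd; rw [sub_self, mul_zero]
      · have hz : moranP N σ (k+1) j = 0 := by
          unfold moranP
          rw [if_neg (by omega), if_neg (by omega), if_neg (by omega), if_neg hd]
        rw [hz, zero_mul])]
    rw [Finset.sum_pair (by omega : k ≠ k+2)]
    have e1 : moranP N σ (k+1) k = ((↑(k+1):ℝ)/N) * (1 - (↑(k+1):ℝ)/N) / (1 + σ * ((↑(k+1):ℝ)/N)) := by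
      unfold moranP
      rw [if_neg (by omega), if_neg (by omega), if_pos rfl]
    have e2 : moranP N σ (k+1) (k+2) = (1+σ) * ((↑(k+1):ℝ)/N) * (1 - (↑(k+1):ℝ)/N) / (1 + σ * ((↑(k+1):ℝ)/N)) := by
      unfold moranP
      rw [if_neg (by omega), if_pos (by omega)]
    rw [e1, e2]
    have fk : (↑k:ℝ)/N - (↑(k+1):ℝ)/N = -(1/N) := by push_cast; field_simp; ring
    have f2 : (↑(k+2):ℝ)/N - (↑(k+1):ℝ)/N = 1/N := by push_cast; field_simp; ring
    rw [fk, f2]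
    have hNpos : (0:ℝ) < N := by positivity
    have hg2 : ((N:ℝ) + σ * ((k:ℝ)+1)) ≠ 0 := by
      have hmul : (N:ℝ) * (1 + σ * ((↑(k+1):ℝ)/N)) = (N:ℝ) + σ * ((k:ℝ)+1) := by
        push_cast; field_simp
      have := mul_pos hNpos hg
      rw [hmul] at this
      exact this.ne'
    field_simp [hN0, hg2]
    ring

set_option maxHeartbeats 1000000 in
/-- the scaled one-step drift of the Moran chain converges to the
Wright–Fisher drift `γ x (1−x)`, uniformly in `x` when `i_N = ⌊Nx⌋`. -/
theorem moran_drift_limit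
    (γ : ℝ) (σ : ℕ → ℝ) (hσ : ∀ N, σ N > -1)
    (hσγ : Tendsto (fun N : ℕ => (N : ℝ) * σ N) atTop (nhds γ))
    (i : ℕ → ℕ) (hi : ∀ N, i N ≤ N)
    (x : ℝ) (hx : x ∈ Set.Icc (0 : ℝ) 1)
    (hix : Tendsto (fun N : ℕ => (i N : ℝ) / N) atTop (nhds x)) :
    Tendsto (fun N : ℕ => (N : ℝ) ^ 2 *
        ∑ j ∈ Finset.range (N + 1),
          moranP N (σ N) (i N) j * ((j : ℝ) / N - (i N : ℝ) / N))
      atTop (nhds (γ * x * (1 - x)))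
    ∧ TendstoUniformlyOn
        (fun (N : ℕ) (y : ℝ) => (N : ℝ) ^ 2 *
          ∑ j ∈ Finset.range (N + 1),
            moranP N (σ N) ⌊(N : ℝ) * y⌋₊ j * ((j : ℝ) / N - (⌊(N : ℝ) * y⌋₊ : ℝ) / N))
        (fun y => γ * y * (1 - y)) atTop (Set.Icc 0 1) := by
  have hσ0 : Tendsto σ atTop (nhds 0) := by
    have h1 : Tendsto (fun N : ℕ => ((N:ℝ) * σ N) * (1/(N:ℝ))) atTop (nhds (γ * 0)) :=
      hσγ.mul tendsto_one_div_atTop_nhds_zero_nat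
    rw [mul_zero] at h1
    apply h1.congr'
    filter_upwards [eventually_ge_atTop 1] with N hN
    have hN0 : (N:ℝ) ≠ 0 := Nat.cast_ne_zero.mpr (by omega)
    field_simp
  constructor
  · -- pointwise part
    have hA : Tendsto (fun N : ℕ => ((N:ℝ)*σ N) *
        (((i N:ℝ)/N) * (1 - (i N:ℝ)/N) / (1 + σ N * ((i N:ℝ)/N))))
        atTop (nhds (γ * (x * (1-x) / (1 + 0 * x)))) := by
      exact hσγ.mul ((hix.mul (tendsto_const_nhds.sub hix)).div
        (tendsto_const_nhds.add (hσ0.mul hix)) (by norm_num))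
    have hval : γ * (x * (1-x) / (1 + 0 * x)) = γ * x * (1-x) := by
      norm_num; ring
    rw [hval] at hA
    apply hA.congr'
    filter_upwards [eventually_ge_atTop 1] with N hN
    exact (moran_sum_eq N hN (σ N) (hσ N) (i N) (hi N)).symm
  · -- uniform part
    rw [Metric.tendstoUniformlyOn_iff]
    intro ε hε
    set C := |γ| + 1 with hCdef
    have hC : 0 < C := by positivity
    have hev1 : ∀ᶠ N : ℕ in atTop, |(N:ℝ)*σ N - γ| < ε/4 := by
      have := Metric.tendsto_nhds.mp hσγ (ε/4) (by positivity)
      simpa [Real.dist_eq] using this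
    have hev2 : ∀ᶠ N : ℕ in atTop, |(N:ℝ)*σ N| ≤ C := by
      have := Metric.tendsto_nhds.mp hσγ 1 one_pos
      simp only [Real.dist_eq] at this
      filter_upwards [this] with N h
      have := abs_sub_abs_le_abs_sub ((N:ℝ)*σ N) γ
      rw [hCdef]; linarith [abs_sub_comm ((N:ℝ)*σ N) γ ▸ h]
    have hev3 : ∀ᶠ N : ℕ in atTop, |σ N| < min (1/2) (ε/(16*C)) := by
      have := Metric.tendsto_nhds.mp hσ0 (min (1/2) (ε/(16*C)))
        (lt_min (by norm_num) (by positivity))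
      simpa [Real.dist_eq] using this
    have hev4 : ∀ᶠ N : ℕ in atTop, (1:ℝ)/(N:ℝ) < ε/(16*C) := by
      have := Metric.tendsto_nhds.mp (tendsto_one_div_atTop_nhds_zero_nat : Tendsto (fun n : ℕ => 1/(n:ℝ)) atTop (nhds 0)) (ε/(16*C))
        (by positivity)
      simp only [Real.dist_eq, sub_zero] at this
      filter_upwards [this, eventually_ge_atTop 1] with N h hN
      have : (0:ℝ) < (N:ℝ) := by exact_mod_cast Nat.pos_of_ne_zero (by omega)
      calc (1:ℝ)/(N:ℝ) ≤ |1/(N:ℝ)| := le_abs_self _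
        _ < ε/(16*C) := h
    filter_upwards [hev1, hev2, hev3, hev4, eventually_ge_atTop 1] with N h1 h2 h3 h4 hN1
    intro y hy
    obtain ⟨hy0, hy1⟩ := hy
    have hNpos : (0:ℝ) < (N:ℝ) := by exact_mod_cast Nat.pos_of_ne_zero (by omega)
    have hN0 : (N:ℝ) ≠ 0 := hNpos.ne'
    -- floor facts
    have hfl1 : (⌊(N:ℝ)*y⌋₊ : ℝ) ≤ (N:ℝ)*y := Nat.floor_le (by positivity)
    have hfl2 : (N:ℝ)*y < (⌊(N:ℝ)*y⌋₊ : ℝ) + 1 := Nat.lt_floor_add_one _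
    have hflN : ⌊(N:ℝ)*y⌋₊ ≤ N := by
      have : ((⌊(N:ℝ)*y⌋₊:ℕ):ℝ) ≤ (N:ℝ) := le_trans hfl1 (by nlinarith)
      exact_mod_cast this
    have ha0' : (0:ℝ) ≤ (⌊(N:ℝ)*y⌋₊ : ℝ) / N := by positivity
    have ha1' : (⌊(N:ℝ)*y⌋₊ : ℝ) / N ≤ 1 := by
      rw [div_le_one hNpos]; exact_mod_cast hflN
    have hay1' : (⌊(N:ℝ)*y⌋₊ : ℝ) / N ≤ y := by
      rw [div_le_iff₀ hNpos]; linarith [hfl1]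
    have hay2' : y - (⌊(N:ℝ)*y⌋₊ : ℝ) / N ≤ 1/N := by
      rw [le_div_iff₀ hNpos]
      have e : (y - (⌊(N:ℝ)*y⌋₊:ℝ)/N) * N = N*y - (⌊(N:ℝ)*y⌋₊:ℝ) := by
        field_simp
      rw [e]; linarith
    -- rewrite goal via the sum formula, then abbreviate
    have hFeq := moran_sum_eq N hN1 (σ N) (hσ N) ⌊(N:ℝ)*y⌋₊ hflN
    rw [Real.dist_eq, abs_sub_comm, hFeq]
    set a : ℝ := (⌊(N:ℝ)*y⌋₊ : ℝ) / N with hadef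
    set A : ℝ := (N:ℝ) * σ N with hAdef
    set D : ℝ := 1 + σ N * a with hDdef
    have ha0 : 0 ≤ a := ha0'
    have ha1 : a ≤ 1 := ha1'
    have hay1 : a ≤ y := hay1'
    have hay2 : y - a ≤ 1/N := hay2'
    obtain ⟨hs1, hs2⟩ := lt_min_iff.mp h3
    obtain ⟨hsl, hsr⟩ := abs_le.mp hs1.le
    have hD : (1:ℝ)/2 ≤ D := by
      have hprod : 0 ≤ a * (σ N + 1/2) := mul_nonneg ha0 (by linarith)
      rw [hDdef]; nlinarith
    have hDpos : (0:ℝ) < D := by linarith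
    -- numerator decomposition
    have hkey : A * (a*(1-a) / D) - γ*y*(1-y)
        = (A * (a*(1-a) - y*(1-y)) + (A - γ)*(y*(1-y)) + -(γ*(y*(1-y))*(σ N * a))) / D := by
      field_simp
      ring
    have hphidiff : |a*(1-a) - y*(1-y)| ≤ 1/N := by
      have e : a*(1-a) - y*(1-y) = (a-y)*(1-(a+y)) := by ring
      rw [e, abs_mul]
      have h5 : |a-y| ≤ 1/N := by
        rw [abs_le]; constructor <;> [linarith; nlinarith]
      have h6 : |1-(a+y)| ≤ 1 := by
        rw [abs_le]; constructor <;> linarith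
      calc |a-y| * |1-(a+y)| ≤ (1/N) * 1 :=
            mul_le_mul h5 h6 (abs_nonneg _) (by positivity)
        _ = 1/N := mul_one _
    have hphy : |y*(1-y)| ≤ 1 := by
      rw [abs_le]; constructor <;> nlinarith
    have hE : C * (ε/(16*C)) = ε/16 := by field_simp
    have hX : |A * (a*(1-a) - y*(1-y))| ≤ ε/16 := by
      rw [abs_mul]
      calc |A| * |a*(1-a) - y*(1-y)| ≤ C * (1/N) :=
            mul_le_mul h2 hphidiff (abs_nonneg _) hC.le
        _ ≤ C * (ε/(16*C)) := by nlinarith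
        _ = ε/16 := hE
    have hY : |(A - γ)*(y*(1-y))| ≤ ε/4 := by
      rw [abs_mul]
      calc |A - γ| * |y*(1-y)| ≤ (ε/4) * 1 :=
            mul_le_mul h1.le hphy (abs_nonneg _) (by positivity)
        _ = ε/4 := mul_one _
    have hZ : |-(γ*(y*(1-y))*(σ N * a))| ≤ ε/16 := by
      rw [abs_neg, abs_mul, abs_mul]
      have hγle : |γ| ≤ C := by rw [hCdef]; linarith
      have hσa : |σ N * a| ≤ ε/(16*C) := by
        rw [abs_mul, abs_of_nonneg ha0]
        nlinarith [abs_nonneg (σ N)]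
      calc |γ| * |y*(1-y)| * |σ N * a| ≤ (C * 1) * (ε/(16*C)) := by
            apply mul_le_mul _ hσa (abs_nonneg _) (by positivity)
            exact mul_le_mul hγle hphy (abs_nonneg _) hC.le
        _ = ε/16 := by rw [mul_one]; exact hE
    have hnum : |A * (a*(1-a) - y*(1-y)) + (A - γ)*(y*(1-y)) + -(γ*(y*(1-y))*(σ N * a))|
        ≤ ε/16 + ε/4 + ε/16 := by
      calc _ ≤ |A * (a*(1-a) - y*(1-y))| + |(A - γ)*(y*(1-y))| + |-(γ*(y*(1-y))*(σ N * a))| :=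
            abs_add_three _ _ _
        _ ≤ ε/16 + ε/4 + ε/16 := by linarith
    have hfinal : |A * (a*(1-a) / D) - γ*y*(1-y)| < ε := by
      rw [hkey, abs_div, abs_of_pos hDpos, div_lt_iff₀ hDpos]
      nlinarith [abs_nonneg (A * (a*(1-a) - y*(1-y)) + (A - γ)*(y*(1-y)) + -(γ*(y*(1-y))*(σ N * a)))]
    exact hfinal
end

section
/- Let γ be real and (σ_N) a sequence of reals with σ_N > −1 and N·σ_N → γ as N → ∞. Then for every function h that is twice continuously differentiable on [0,1], lim_{N→∞} sup_{x∈[0,1]} | N²·( Σ_{j=0}^{N} p_{N,σ_N}(⌊Nx⌋, j)·h(j/N) − h(⌊Nx⌋/N) ) − ( x(1−x)h''(x) + γ x(1−x)h'(x) ) | = 0. -/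
open Filter

lemma taylor1' {f f' : ℝ → ℝ} {s : Set ℝ} (hs : Convex ℝ s)
    (hf : ∀ t ∈ s, HasDerivWithinAt f (f' t) s t)
    {a b δ ε : ℝ} (ha : a ∈ s) (hb : b ∈ s)
    (hmod : ∀ t ∈ s, |t - a| ≤ δ → |f' t - f' a| ≤ ε)
    (hab : |b - a| ≤ δ) :
    |f b - f a - f' a * (b - a)| ≤ ε * |b - a| := by
  set s' := s ∩ Metric.closedBall a δ with hs'def
  have hs' : Convex ℝ s' := hs.inter (convex_closedBall a δ)
  have ha' : a ∈ s' := ⟨ha, Metric.mem_closedBall_self (le_trans (abs_nonneg _) hab)⟩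
  have hb' : b ∈ s' := ⟨hb, by simpa [Metric.mem_closedBall, Real.dist_eq] using hab⟩
  have hg : ∀ t ∈ s', HasDerivWithinAt (fun t => f t - f' a * t) (f' t - f' a) s' t := by
    intro t ht
    have h2 : HasDerivAt (fun t : ℝ => f' a * t) (f' a) t := by
      simpa using (hasDerivAt_id t).const_mul (f' a)
    exact ((hf t ht.1).mono Set.inter_subset_left).sub h2.hasDerivWithinAt
  have bound : ∀ t ∈ s', ‖f' t - f' a‖ ≤ ε := by
    intro t ht
    rw [Real.norm_eq_abs]
    exact hmod t ht.1 (by simpa [Metric.mem_closedBall, Real.dist_eq] using ht.2)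
  have key := hs'.norm_image_sub_le_of_norm_hasDerivWithin_le hg bound ha' hb'
  calc |f b - f a - f' a * (b - a)|
      = ‖(f b - f' a * b) - (f a - f' a * a)‖ := by rw [Real.norm_eq_abs]; congr 1; ring
    _ ≤ ε * ‖b - a‖ := key
    _ = ε * |b - a| := by rw [Real.norm_eq_abs]

lemma taylor2' {f f' f'' : ℝ → ℝ} {s : Set ℝ} (hs : Convex ℝ s)
    (hf : ∀ t ∈ s, HasDerivWithinAt f (f' t) s t)
    (hf' : ∀ t ∈ s, HasDerivWithinAt f' (f'' t) s t)
    {a b δ ε : ℝ} (ha : a ∈ s) (hb : b ∈ s) (hε : 0 ≤ ε)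
    (hmod : ∀ t ∈ s, |t - a| ≤ δ → |f'' t - f'' a| ≤ ε)
    (hab : |b - a| ≤ δ) :
    |f b - f a - f' a * (b - a) - f'' a * (b - a) ^ 2 / 2| ≤ ε * δ * |b - a| := by
  have hδ0 : 0 ≤ δ := le_trans (abs_nonneg _) hab
  set s' := s ∩ Metric.closedBall a δ with hs'def
  have hs' : Convex ℝ s' := hs.inter (convex_closedBall a δ)
  have ha' : a ∈ s' := ⟨ha, Metric.mem_closedBall_self hδ0⟩
  have hb' : b ∈ s' := ⟨hb, by simpa [Metric.mem_closedBall, Real.dist_eq] using hab⟩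
  have hg : ∀ t ∈ s', HasDerivWithinAt
      (fun t => f t - f' a * t - f'' a * (t - a) ^ 2 / 2)
      (f' t - f' a - f'' a * (t - a)) s' t := by
    intro t ht
    have h2 : HasDerivAt (fun t : ℝ => f' a * t) (f' a) t := by
      simpa using (hasDerivAt_id t).const_mul (f' a)
    have h3 : HasDerivAt (fun t : ℝ => f'' a * (t - a) ^ 2 / 2) (f'' a * (t - a)) t := by
      have := (((hasDerivAt_id t).sub_const a).pow 2).const_mul (f'' a)
      have h4 := this.div_const 2
      refine HasDerivAt.congr_deriv h4 ?_
      simp only [id_eq]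
      push_cast
      ring
    exact (((hf t ht.1).mono Set.inter_subset_left).sub h2.hasDerivWithinAt).sub
      h3.hasDerivWithinAt
  have bound : ∀ t ∈ s', ‖f' t - f' a - f'' a * (t - a)‖ ≤ ε * δ := by
    intro t ht
    have hta : |t - a| ≤ δ := by simpa [Metric.mem_closedBall, Real.dist_eq] using ht.2
    have := taylor1' hs hf' ha ht.1 hmod hta
    rw [Real.norm_eq_abs]
    calc |f' t - f' a - f'' a * (t - a)| ≤ ε * |t - a| := this
      _ ≤ ε * δ := by gcongr
  have key := hs'.norm_image_sub_le_of_norm_hasDerivWithin_le hg bound ha' hb'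
  calc |f b - f a - f' a * (b - a) - f'' a * (b - a) ^ 2 / 2|
      = ‖(f b - f' a * b - f'' a * (b - a) ^ 2 / 2)
          - (f a - f' a * a - f'' a * (a - a) ^ 2 / 2)‖ := by
        rw [Real.norm_eq_abs]; congr 1; ring
    _ ≤ ε * δ * ‖b - a‖ := key
    _ = ε * δ * |b - a| := by rw [Real.norm_eq_abs]

lemma moran_sum_absorb (N : ℕ) (σ : ℝ) (i : ℕ) (hi : i = 0 ∨ i = N) (hiN : i ≤ N)
    (g : ℕ → ℝ) :
    ∑ j ∈ Finset.range (N + 1), moranP N σ i j * g j = g i := by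
  have e : ∀ j, moranP N σ i j * g j = if j = i then g j else 0 := by
    intro j
    simp only [moranP, if_pos hi]
    split <;> simp
  rw [Finset.sum_congr rfl fun j _ => e j, Finset.sum_ite_eq' (Finset.range (N + 1)) i g,
    if_pos (Finset.mem_range.mpr (Nat.lt_succ_of_le hiN))]

lemma moran_sum (N : ℕ) (σ : ℝ) (i : ℕ) (hi1 : 1 ≤ i) (hiN : i < N) (g : ℕ → ℝ) :
    ∑ j ∈ Finset.range (N + 1), moranP N σ i j * g j
      = g i + ((1 + σ) * ((i : ℝ) / N) * (1 - (i : ℝ) / N) / (1 + σ * ((i : ℝ) / N)))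
            * (g (i + 1) - g i)
          + (((i : ℝ) / N) * (1 - (i : ℝ) / N) / (1 + σ * ((i : ℝ) / N)))
            * (g (i - 1) - g i) := by
  have hne : ¬(i = 0 ∨ i = N) := by omega
  have e : ∀ j, moranP N σ i j * g j
      = (if j = i + 1 then
          ((1 + σ) * ((i : ℝ) / N) * (1 - (i : ℝ) / N) / (1 + σ * ((i : ℝ) / N))) * g (i + 1)
         else 0)
        + ((if j = i - 1 then
            (((i : ℝ) / N) * (1 - (i : ℝ) / N) / (1 + σ * ((i : ℝ) / N))) * g (i - 1)
           else 0)
        + (if j = i then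
            (1 - ((1 + σ) * ((i : ℝ) / N) * (1 - (i : ℝ) / N) / (1 + σ * ((i : ℝ) / N)))
               - (((i : ℝ) / N) * (1 - (i : ℝ) / N) / (1 + σ * ((i : ℝ) / N)))) * g i
           else 0)) := by
    intro j
    simp only [moranP, if_neg hne]
    split_ifs with h1 h2 h3 <;>
      first | (exfalso; omega) | (subst_vars; ring1) | (subst_vars; simp)
  rw [Finset.sum_congr rfl fun j _ => e j, Finset.sum_add_distrib, Finset.sum_add_distrib,
    Finset.sum_ite_eq' (Finset.range (N + 1)) (i + 1),
    Finset.sum_ite_eq' (Finset.range (N + 1)) (i - 1),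
    Finset.sum_ite_eq' (Finset.range (N + 1)) i,
    if_pos (Finset.mem_range.mpr (by omega : i + 1 < N + 1)),
    if_pos (Finset.mem_range.mpr (by omega : i - 1 < N + 1)),
    if_pos (Finset.mem_range.mpr (by omega : i < N + 1))]
  ring

set_option maxHeartbeats 1000000 in
/-- for every `h` twice continuously differentiable on `[0,1]`, the scaled
generator of the Moran chain applied to `h` converges uniformly on `[0,1]` to the
Wright–Fisher generator `L h(x) = x(1−x)h''(x) + γ x(1−x)h'(x)`. -/
theorem moran_generator_limit
    (γ : ℝ) (σ : ℕ → ℝ) (hσ : ∀ N, σ N > -1)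
    (hσγ : Tendsto (fun N : ℕ => (N : ℝ) * σ N) atTop (nhds γ))
    (h : ℝ → ℝ) (hh : ContDiffOn ℝ 2 h (Set.Icc 0 1)) :
    TendstoUniformlyOn
      (fun (N : ℕ) (x : ℝ) => (N : ℝ) ^ 2 *
        ((∑ j ∈ Finset.range (N + 1),
            moranP N (σ N) ⌊(N : ℝ) * x⌋₊ j * h ((j : ℝ) / N))
          - h ((⌊(N : ℝ) * x⌋₊ : ℝ) / N)))
      (fun x =>
        x * (1 - x) * derivWithin (derivWithin h (Set.Icc 0 1)) (Set.Icc 0 1) x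
          + γ * x * (1 - x) * derivWithin h (Set.Icc 0 1) x)
      atTop (Set.Icc 0 1) := by
  classical
  set s : Set ℝ := Set.Icc (0:ℝ) 1 with hsdef
  have hsconv : Convex ℝ s := convex_Icc 0 1
  have hud : UniqueDiffOn ℝ s := uniqueDiffOn_Icc one_pos
  set h1 : ℝ → ℝ := derivWithin h s with hh1def
  set h2 : ℝ → ℝ := derivWithin h1 s with hh2def
  have hh1 : ContDiffOn ℝ 1 h1 s := hh.derivWithin hud (by norm_num)
  have hder : ∀ t ∈ s, HasDerivWithinAt h (h1 t) s t := fun t ht =>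
    ((hh.differentiableOn (by norm_num)) t ht).hasDerivWithinAt
  have hder1 : ∀ t ∈ s, HasDerivWithinAt h1 (h2 t) s t := fun t ht =>
    ((hh1.differentiableOn (by norm_num)) t ht).hasDerivWithinAt
  have hc1 : ContinuousOn h1 s := hh1.continuousOn
  have hc2 : ContinuousOn h2 s := by
    have hcd : ContDiffOn ℝ 0 h2 s := hh1.derivWithin hud (by norm_num)
    exact hcd.continuousOn
  obtain ⟨M1, hM1⟩ := isCompact_Icc.exists_bound_of_continuousOn hc1
  obtain ⟨M2, hM2⟩ := isCompact_Icc.exists_bound_of_continuousOn hc2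
  have h0s : (0:ℝ) ∈ s := by constructor <;> norm_num
  have hM1n : 0 ≤ M1 := le_trans (norm_nonneg _) (hM1 0 h0s)
  have hM2n : 0 ≤ M2 := le_trans (norm_nonneg _) (hM2 0 h0s)
  rw [Metric.tendstoUniformlyOn_iff]
  intro ε hε
  set K : ℝ := 4 + 2*M2 + 2*(|γ|+1) + (1+2*|γ|)*M1 with hKdef
  have hKpos : 0 < K := by positivity
  set ε' : ℝ := min (ε / (2*K)) 1 with hε'def
  have hε'pos : 0 < ε' := lt_min (by positivity) one_pos
  have hε'le : ε' ≤ ε/(2*K) := min_le_left _ _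
  have hε'1 : ε' ≤ 1 := min_le_right _ _
  have hεK : ε' * K ≤ ε/2 := by
    calc ε' * K ≤ (ε/(2*K)) * K := mul_le_mul_of_nonneg_right hε'le hKpos.le
      _ = ε/2 := by field_simp
  obtain ⟨δ₁, hδ₁pos, hδ₁⟩ := Metric.uniformContinuousOn_iff.mp
    (isCompact_Icc.uniformContinuousOn_of_continuous hc1) ε' hε'pos
  obtain ⟨δ₂, hδ₂pos, hδ₂⟩ := Metric.uniformContinuousOn_iff.mp
    (isCompact_Icc.uniformContinuousOn_of_continuous hc2) ε' hε'pos
  have hσ0 : Tendsto (fun N : ℕ => σ N) atTop (nhds 0) := by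
    have h2' := hσγ.mul tendsto_one_div_atTop_nhds_zero_nat
    rw [mul_zero] at h2'
    apply h2'.congr'
    filter_upwards [eventually_ge_atTop 1] with N hN
    have hN0 : (N:ℝ) ≠ 0 := by
      have : (0:ℝ) < N := by exact_mod_cast hN
      exact ne_of_gt this
    field_simp
  have Ev1 : ∀ᶠ (N:ℕ) in atTop, |σ N| < min ε' (1/2) := by
    have := Metric.tendsto_nhds.mp hσ0 (min ε' (1/2)) (by positivity)
    simpa [Real.dist_eq] using this
  have Ev2 : ∀ᶠ (N:ℕ) in atTop, |(N:ℝ) * σ N - γ| < ε' := by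
    have := Metric.tendsto_nhds.mp hσγ ε' hε'pos
    simpa [Real.dist_eq] using this
  have Ev3 : ∀ᶠ (N:ℕ) in atTop, 1/(N:ℝ) < min (min (δ₁/2) (δ₂/2)) ε' := by
    exact tendsto_one_div_atTop_nhds_zero_nat.eventually_lt_const (by positivity)
  filter_upwards [Ev1, Ev2, Ev3, eventually_ge_atTop 1] with N hEv1 hEv2 hEv3 hN1
  intro x hx
  have hN0 : (0:ℝ) < N := by exact_mod_cast hN1
  obtain ⟨hx0, hx1⟩ := hx
  have hNx0 : 0 ≤ (N:ℝ)*x := by positivity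
  rw [Real.dist_eq]
  set i := ⌊(N:ℝ) * x⌋₊ with hidef
  have hfl : (i:ℝ) ≤ (N:ℝ)*x := Nat.floor_le hNx0
  have hfu : (N:ℝ)*x < (i:ℝ) + 1 := Nat.lt_floor_add_one _
  have hiN : i ≤ N := by
    have hxN : (N:ℝ)*x ≤ (N:ℝ) := by nlinarith only [hx1, hN0.le]
    have hle : ((i:ℝ)) ≤ (N:ℝ) := hfl.trans hxN
    exact_mod_cast hle
  have hb1x : |h1 x| ≤ M1 := by
    have := hM1 x ⟨hx0, hx1⟩; rwa [Real.norm_eq_abs] at this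
  have hb2x : |h2 x| ≤ M2 := by
    have := hM2 x ⟨hx0, hx1⟩; rwa [Real.norm_eq_abs] at this
  by_cases hiNeq : i = N
  · -- boundary case x = 1
    have hNles : (N:ℝ) ≤ (N:ℝ)*x := by rw [← hiNeq] at hfl ⊢; exact_mod_cast hfl
    have hx1' : x = 1 := le_antisymm hx1 (by nlinarith only [hNles, hN0])
    rw [moran_sum_absorb N (σ N) i (Or.inr hiNeq) hiN (fun j => h ((j:ℝ)/N)), hx1']
    simp
    exact hε
  by_cases hi0 : i = 0
  · -- boundary case near 0
    have hxlt : (N:ℝ)*x < 1 := Nat.floor_eq_zero.mp hi0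
    have hxu : x < 1/(N:ℝ) := by rw [lt_div_iff₀ hN0, mul_comm]; exact hxlt
    have huε' : (1:ℝ)/(N:ℝ) < ε' := lt_of_lt_of_le hEv3 (min_le_right _ _)
    have hxε : x ≤ ε' := by linarith only [hxu, huε']
    rw [moran_sum_absorb N (σ N) i (Or.inl hi0) hiN (fun j => h ((j:ℝ)/N))]
    simp only [sub_self, mul_zero, sub_zero]
    have hx1x0 : (0:ℝ) ≤ x*(1-x) := by nlinarith only [hx0, hx1]
    have hx1xε : x*(1-x) ≤ ε' := by nlinarith only [hx0, hx1, hxε, sq_nonneg x]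
    have e1 : |x*(1-x)*h2 x| ≤ ε' * M2 := by
      rw [abs_mul]
      have b1 : |x*(1-x)| ≤ ε' := by rw [abs_of_nonneg hx1x0]; exact hx1xε
      exact mul_le_mul b1 hb2x (abs_nonneg _) hε'pos.le
    have e2 : |γ*x*(1-x)*h1 x| ≤ |γ| * (ε' * M1) := by
      rw [show γ*x*(1-x)*h1 x = γ*(x*(1-x)*h1 x) from by ring, abs_mul]
      have b1 : |x*(1-x)*h1 x| ≤ ε' * M1 := by
        rw [abs_mul]
        have b2 : |x*(1-x)| ≤ ε' := by rw [abs_of_nonneg hx1x0]; exact hx1xε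
        exact mul_le_mul b2 hb1x (abs_nonneg _) hε'pos.le
      exact mul_le_mul_of_nonneg_left b1 (abs_nonneg _)
    have p1 : 0 ≤ ε'*M2 := mul_nonneg hε'pos.le hM2n
    have p2 : 0 ≤ ε'*|γ| *M1 := mul_nonneg (mul_nonneg hε'pos.le (abs_nonneg γ)) hM1n
    have p3 : 0 ≤ ε'*M1 := mul_nonneg hε'pos.le hM1n
    have p4 : 0 ≤ ε'*|γ| := mul_nonneg hε'pos.le (abs_nonneg γ)
    have eK : ε'*K = 4*ε' + 2*(ε'*M2) + 2*(ε'*|γ|) + 2*ε' + ε'*M1 + 2*(ε'*|γ| *M1) := by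
      rw [hKdef]; ring
    calc |x*(1-x)*h2 x + γ*x*(1-x)*h1 x|
        ≤ |x*(1-x)*h2 x| + |γ*x*(1-x)*h1 x| := abs_add_le _ _
      _ ≤ ε' * M2 + |γ| * (ε' * M1) := add_le_add e1 e2
      _ ≤ ε' * K := by linarith only [p1, p2, p3, p4, eK, hε'pos.le]
      _ ≤ ε/2 := hεK
      _ < ε := by linarith only [hε]
  -- main case 1 ≤ i < N
  have hi1 : 1 ≤ i := Nat.one_le_iff_ne_zero.mpr hi0
  have hiltN : i < N := lt_of_le_of_ne hiN hiNeq
  have hi1R : (1:ℝ) ≤ (i:ℝ) := by exact_mod_cast hi1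
  have hiNR : (i:ℝ) + 1 ≤ (N:ℝ) := by exact_mod_cast hiltN
  set u : ℝ := 1/(N:ℝ) with hu
  have hu0 : 0 < u := by positivity
  have huε : u ≤ ε' := (lt_of_lt_of_le hEv3 (min_le_right _ _)).le
  have huδ₁ : u < δ₁ := by
    have hd := lt_of_lt_of_le hEv3 (le_trans (min_le_left _ _) (min_le_left _ _))
    linarith only [hd, hδ₁pos]
  have huδ₂ : u < δ₂ := by
    have hd := lt_of_lt_of_le hEv3 (le_trans (min_le_left _ _) (min_le_right _ _))
    linarith only [hd, hδ₂pos]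
  set y : ℝ := (i:ℝ)/N with hy
  have hy0 : 0 ≤ y := by positivity
  have hy1 : y ≤ 1 := by rw [hy, div_le_one hN0]; linarith only [hiNR]
  have hys : y ∈ s := ⟨hy0, hy1⟩
  have hyu : y + u = ((i:ℝ)+1)/N := by rw [hy, hu]; ring
  have hym : y - u = ((i:ℝ)-1)/N := by rw [hy, hu]; ring
  have hyus : y + u ∈ s := by
    constructor
    · linarith only [hy0, hu0.le]
    · rw [hyu, div_le_one hN0]; linarith only [hiNR]
  have hyms : y - u ∈ s := by
    constructor
    · rw [hym]
      apply div_nonneg _ hN0.le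
      linarith only [hi1R]
    · linarith only [hy1, hu0.le]
  have hyle : y ≤ x := by rw [hy, div_le_iff₀ hN0]; linarith only [hfl]
  have hxlt : x < y + u := by rw [hyu, lt_div_iff₀ hN0]; linarith only [hfu]
  have hyx : |y - x| ≤ u := by
    rw [abs_le]
    constructor
    · linarith only [hxlt]
    · linarith only [hyle, hu0.le]
  have hmod1 : ∀ t ∈ s, |t - y| ≤ u → |h1 t - h1 y| ≤ ε' := by
    intro t ht hty
    have hd := hδ₁ t ht y hys (by rw [Real.dist_eq]; exact lt_of_le_of_lt hty huδ₁)
    rw [Real.dist_eq] at hd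
    exact hd.le
  have hmod2 : ∀ t ∈ s, |t - y| ≤ u → |h2 t - h2 y| ≤ ε' := by
    intro t ht hty
    have hd := hδ₂ t ht y hys (by rw [Real.dist_eq]; exact lt_of_le_of_lt hty huδ₂)
    rw [Real.dist_eq] at hd
    exact hd.le
  have habs_u : |y + u - y| ≤ u := by
    rw [show y + u - y = u from by ring]
    exact (abs_of_pos hu0).le
  have habs_um : |y - u - y| ≤ u := by
    rw [show y - u - y = -u from by ring, abs_neg]
    exact (abs_of_pos hu0).le
  have hT1 := taylor1' hsconv hder hys hyus hmod1 habs_u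
  have hT2a := taylor2' hsconv hder hder1 hys hyus hε'pos.le hmod2 habs_u
  have hT2b := taylor2' hsconv hder hder1 hys hyms hε'pos.le hmod2 habs_um
  rw [show y + u - y = u from by ring] at hT1 hT2a
  rw [abs_of_pos hu0] at hT1 hT2a
  rw [show y - u - y = -u from by ring, abs_neg, abs_of_pos hu0] at hT2b
  set T : ℝ := (N:ℝ) * (h (y+u) - h y) with hTdef
  set S : ℝ := (N:ℝ)^2 * (h (y+u) + h (y-u) - 2*h y) with hSdef
  have hNu : (N:ℝ) * u = 1 := by rw [hu]; field_simp
  have hTb : |T - h1 y| ≤ ε' := by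
    have e : T - h1 y = (N:ℝ) * (h (y+u) - h y - h1 y * u) := by
      rw [hTdef]; linear_combination (h1 y) * hNu
    rw [e, abs_mul, abs_of_pos hN0]
    calc (N:ℝ) * |h (y+u) - h y - h1 y * u| ≤ (N:ℝ) * (ε' * u) :=
        mul_le_mul_of_nonneg_left hT1 hN0.le
      _ = ε' * ((N:ℝ) * u) := by ring
      _ = ε' := by rw [hNu, mul_one]
  have hSb : |S - h2 y| ≤ 2*ε' := by
    have e : S - h2 y = (N:ℝ)^2 * ((h (y+u) - h y - h1 y * u - h2 y * u^2/2)
        + (h (y-u) - h y - h1 y * (-u) - h2 y * (-u)^2/2)) := by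
      rw [hSdef]; linear_combination (h2 y * ((N:ℝ)*u + 1)) * hNu
    rw [e, abs_mul, abs_of_nonneg (by positivity : (0:ℝ) ≤ (N:ℝ)^2)]
    have hsum2 : |(h (y+u) - h y - h1 y * u - h2 y * u^2/2)
        + (h (y-u) - h y - h1 y * (-u) - h2 y * (-u)^2/2)| ≤ 2*(ε' * u * u) := by
      have hadd := abs_add_le (h (y+u) - h y - h1 y * u - h2 y * u^2/2)
        (h (y-u) - h y - h1 y * (-u) - h2 y * (-u)^2/2)
      linarith only [hT2a, hT2b, hadd]
    calc (N:ℝ)^2 * |(h (y+u) - h y - h1 y * u - h2 y * u^2/2)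
          + (h (y-u) - h y - h1 y * (-u) - h2 y * (-u)^2/2)|
        ≤ (N:ℝ)^2 * (2*(ε'*u*u)) := mul_le_mul_of_nonneg_left hsum2 (by positivity)
      _ = 2*ε' * (((N:ℝ)*u) * ((N:ℝ)*u)) := by ring
      _ = 2*ε' := by rw [hNu]; ring
  have hσε : |σ N| ≤ ε' := (lt_of_lt_of_le hEv1 (min_le_left _ _)).le
  have hσhalf : |σ N| ≤ 1/2 := (lt_of_lt_of_le hEv1 (min_le_right _ _)).le
  obtain ⟨hσl, hσr⟩ := abs_le.mp hσhalf
  have hden : (1:ℝ)/2 ≤ 1 + σ N * y := by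
    have hp := mul_nonneg (by linarith only [hσl] : (0:ℝ) ≤ σ N + 1/2) hy0
    linarith only [hp, hy1]
  have hdpos : (0:ℝ) < 1 + σ N * y := by linarith only [hden]
  set q : ℝ := y*(1-y)/(1 + σ N * y) with hqdef
  have hy1y : (0:ℝ) ≤ y*(1-y) := mul_nonneg hy0 (by linarith only [hy1])
  have hq0 : 0 ≤ q := div_nonneg hy1y hdpos.le
  have hq1 : q ≤ 1 := by
    rw [hqdef, div_le_one hdpos]
    linarith only [sq_nonneg (y - 1/2), hden]
  have hqy : |q - y*(1-y)| ≤ ε' := by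
    have e : q - y*(1-y) = -(σ N * y * (y*(1-y))) / (1 + σ N * y) := by
      rw [hqdef, div_sub' hdpos.ne', neg_div]
      congr 1
      ring
    rw [e, abs_div, abs_of_pos hdpos, div_le_iff₀ hdpos]
    have hnum : |-(σ N * y * (y*(1-y)))| ≤ ε' * (1/2) := by
      rw [abs_neg, abs_mul, abs_mul, abs_of_nonneg hy0, abs_of_nonneg hy1y]
      have b1 : y*(1-y) ≤ 1/2 := by linarith only [sq_nonneg (y-1/2)]
      have b2 : |σ N| * y ≤ ε' := by
        calc |σ N| * y ≤ ε' * 1 := mul_le_mul hσε hy1 hy0 hε'pos.le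
          _ = ε' := mul_one _
      exact mul_le_mul b2 b1 hy1y hε'pos.le
    calc |-(σ N * y * (y*(1-y)))| ≤ ε' * (1/2) := hnum
      _ ≤ ε' * (1 + σ N * y) := mul_le_mul_of_nonneg_left hden hε'pos.le
  have hyyxx : |y*(1-y) - x*(1-x)| ≤ ε' := by
    rw [show y*(1-y) - x*(1-x) = (y - x)*(1 - x - y) from by ring, abs_mul]
    have b1 : |y - x| ≤ ε' := le_trans hyx huε
    have b2 : |1 - x - y| ≤ 1 := by
      rw [abs_le]
      constructor
      · linarith only [hx1, hy1]
      · linarith only [hx0, hy0]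
    calc |y - x| * |1 - x - y| ≤ ε' * 1 := mul_le_mul b1 b2 (abs_nonneg _) hε'pos.le
      _ = ε' := mul_one _
  have hqx : |q - x*(1-x)| ≤ 2*ε' := by
    calc |q - x*(1-x)| ≤ |q - y*(1-y)| + |y*(1-y) - x*(1-x)| := abs_sub_le _ _ _
      _ ≤ ε' + ε' := add_le_add hqy hyyxx
      _ = 2*ε' := by ring
  have hsγ : |(N:ℝ)*σ N - γ| ≤ ε' := hEv2.le
  have hsb : |(N:ℝ)*σ N| ≤ |γ| + 1 := by
    calc |(N:ℝ)*σ N| = |((N:ℝ)*σ N - γ) + γ| := by congr 1; ring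
      _ ≤ |(N:ℝ)*σ N - γ| + |γ| := abs_add_le _ _
      _ ≤ |γ| + 1 := by linarith only [hsγ, hε'1]
  have hc1x : |h1 y - h1 x| ≤ ε' := by
    have hd := hδ₁ y hys x ⟨hx0, hx1⟩ (by rw [Real.dist_eq]; exact lt_of_le_of_lt hyx huδ₁)
    rw [Real.dist_eq] at hd
    exact hd.le
  have hc2x : |h2 y - h2 x| ≤ ε' := by
    have hd := hδ₂ y hys x ⟨hx0, hx1⟩ (by rw [Real.dist_eq]; exact lt_of_le_of_lt hyx huδ₂)
    rw [Real.dist_eq] at hd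
    exact hd.le
  have hSx : |S - h2 x| ≤ 3*ε' := by
    calc |S - h2 x| ≤ |S - h2 y| + |h2 y - h2 x| := abs_sub_le _ _ _
      _ ≤ 2*ε' + ε' := add_le_add hSb hc2x
      _ = 3*ε' := by ring
  have hTx : |T - h1 x| ≤ 2*ε' := by
    calc |T - h1 x| ≤ |T - h1 y| + |h1 y - h1 x| := abs_sub_le _ _ _
      _ ≤ ε' + ε' := add_le_add hTb hc1x
      _ = 2*ε' := by ring
  have hsum := moran_sum N (σ N) i hi1 hiltN (fun j => h ((j:ℝ)/N))
  have hc1cast : ((i+1 : ℕ):ℝ)/(N:ℝ) = y + u := by push_cast; rw [hyu]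
  have hc2cast : ((i-1 : ℕ):ℝ)/(N:ℝ) = y - u := by
    rw [Nat.cast_sub hi1]
    push_cast
    rw [hym]
  rw [hc1cast, hc2cast, ← hy] at hsum
  rw [hsum]
  have hFeq : (N:ℝ)^2 * (h y + (1 + σ N) * y * (1 - y) / (1 + σ N * y) * (h (y+u) - h y)
      + y * (1 - y) / (1 + σ N * y) * (h (y-u) - h y) - h y)
      = q*S + ((N:ℝ)*σ N)*(q*T) := by
    rw [hqdef, hSdef, hTdef]
    field_simp
    ring
  rw [hFeq]
  set sN : ℝ := (N:ℝ)*σ N with hsNdef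
  rw [show x * (1 - x) * h2 x + γ * x * (1 - x) * h1 x - (q*S + sN*(q*T))
      = -(q*(S - h2 x) + (q - x*(1-x))*h2 x + sN*(q*(T - h1 x)) + (sN - γ)*(q*h1 x)
          + γ*((q - x*(1-x))*h1 x)) from by ring, abs_neg]
  have hqabs : |q| ≤ 1 := by rw [abs_of_nonneg hq0]; exact hq1
  have tri : |q*(S - h2 x) + (q - x*(1-x))*h2 x + sN*(q*(T - h1 x)) + (sN - γ)*(q*h1 x)
        + γ*((q - x*(1-x))*h1 x)|
      ≤ |q| * |S - h2 x| + |q - x*(1-x)| * |h2 x| + |sN| *(|q| * |T - h1 x|)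
        + |sN - γ| *(|q| * |h1 x|) + |γ| *(|q - x*(1-x)| * |h1 x|) := by
    have t1 := abs_add_le (q*(S - h2 x) + (q - x*(1-x))*h2 x + sN*(q*(T - h1 x))
      + (sN - γ)*(q*h1 x)) (γ*((q - x*(1-x))*h1 x))
    have t2 := abs_add_le (q*(S - h2 x) + (q - x*(1-x))*h2 x + sN*(q*(T - h1 x)))
      ((sN - γ)*(q*h1 x))
    have t3 := abs_add_le (q*(S - h2 x) + (q - x*(1-x))*h2 x) (sN*(q*(T - h1 x)))
    have t4 := abs_add_le (q*(S - h2 x)) ((q - x*(1-x))*h2 x)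
    simp only [abs_mul] at t1 t2 t3 t4 ⊢
    linarith only [t1, t2, t3, t4]
  have hKbound : ε'*(3 + 2*M2 + 2*(|γ|+1) + M1 + 2*|γ| *M1) ≤ ε' * K := by
    have eK : ε'*K - ε'*(3 + 2*M2 + 2*(|γ|+1) + M1 + 2*|γ| *M1) = ε' := by
      rw [hKdef]; ring
    linarith only [eK, hε'pos.le]
  calc |q*(S - h2 x) + (q - x*(1-x))*h2 x + sN*(q*(T - h1 x)) + (sN - γ)*(q*h1 x)
        + γ*((q - x*(1-x))*h1 x)|
      ≤ |q| * |S - h2 x| + |q - x*(1-x)| * |h2 x| + |sN| *(|q| * |T - h1 x|)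
        + |sN - γ| *(|q| * |h1 x|) + |γ| *(|q - x*(1-x)| * |h1 x|) := tri
    _ ≤ 1*(3*ε') + (2*ε')*M2 + (|γ|+1)*(1*(2*ε')) + ε'*(1*M1) + |γ| *((2*ε')*M1) := by
        gcongr <;> first | assumption | positivity
    _ = ε'*(3 + 2*M2 + 2*(|γ|+1) + M1 + 2*|γ| *M1) := by ring
    _ ≤ ε' * K := hKbound
    _ ≤ ε/2 := hεK
    _ < ε := by linarith only [hε]
end

section
/- Let γ ≠ 0 be real, δ > 0, and (σ_N) a sequence of reals with σ_N > −1, σ_N ≠ 0, and N·σ_N → γ as N → ∞. Let i_N be integers with 1 ≤ i_N ≤ N and i_N/N → x for some x ∈ [0,1]. Then lim_{N→∞} N² · Σ_{j=0}^{N} q_{N,σ_N}(i_N, j) · |j/N − i_N/N|^{2+δ} = 0. If i_N = min{⌊Nx⌋+1, N}, the convergence is uniform in x for 0 ≤ x ≤ 1. -/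
open Filter

/-- `h_{N,σ}(i) = (1 − (1+σ)^{−i})/(1 − (1+σ)^{−N})`, the probability that the Moran chain
started at `i` is absorbed at `N` before `0`. -/
noncomputable def moranH (N : ℕ) (σ : ℝ) (i : ℕ) : ℝ :=
  (1 - (1 + σ) ^ (-(i : ℤ))) / (1 - (1 + σ) ^ (-(N : ℤ)))

/-- The dual (conditioned on fixation) transition function
`q_{N,σ}(i,j) = p_{N,σ}(i,j)·h_{N,σ}(j)/h_{N,σ}(i)`, with `q_{N,σ}(i,0) = 0`. -/
noncomputable def moranQ (N : ℕ) (σ : ℝ) (i j : ℕ) : ℝ :=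
  if j = 0 then 0 else moranP N σ i j * moranH N σ j / moranH N σ i

noncomputable def gS (r : ℝ) (k : ℕ) : ℝ := ∑ m ∈ Finset.range k, r ^ m

lemma gS_nonneg {r : ℝ} (hr : 0 ≤ r) (k : ℕ) : 0 ≤ gS r k :=
  Finset.sum_nonneg fun m _ => pow_nonneg hr m

lemma gS_pos {r : ℝ} (hr : 0 < r) {k : ℕ} (hk : 1 ≤ k) : 0 < gS r k :=
  Finset.sum_pos (fun m _ => pow_pos hr m) (Finset.nonempty_range_iff.mpr (by omega))

lemma gS_mono {r : ℝ} (hr : 0 ≤ r) {j k : ℕ} (h : j ≤ k) : gS r j ≤ gS r k :=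
  Finset.sum_le_sum_of_subset_of_nonneg (Finset.range_subset_range.mpr h) (fun m _ _ => pow_nonneg hr m)

lemma gS_succ_le {r : ℝ} (hr : 0 ≤ r) {i : ℕ} (hi : 1 ≤ i) :
    gS r (i+1) ≤ (1 + r) * gS r i := by
  have h1 : gS r (i+1) = gS r i + r ^ i := Finset.sum_range_succ _ i
  have h2 : r ^ (i-1) ≤ gS r i :=
    Finset.single_le_sum (f := fun m => r ^ m) (fun m _ => pow_nonneg hr m)
      (Finset.mem_range.mpr (by omega))
  have h3 : r ^ i = r * r ^ (i-1) := by
    rw [← pow_succ']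
    congr 1; omega
  nlinarith [gS_nonneg hr i]

lemma gS_geom (r : ℝ) (m : ℕ) : 1 - r ^ m = (1 - r) * gS r m := by
  have h := geom_sum_mul r m
  unfold gS
  linear_combination h

lemma moranH_eq (N : ℕ) (σ : ℝ) (hσ : -1 < σ) (hσ0 : σ ≠ 0) (k : ℕ) :
    moranH N σ k = gS (1+σ)⁻¹ k / gS (1+σ)⁻¹ N := by
  have hs : (0:ℝ) < 1 + σ := by linarith
  have hr1 : (1:ℝ) - (1+σ)⁻¹ ≠ 0 := by
    rw [sub_ne_zero]
    intro h
    apply hσ0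
    have h2 : (1+σ) * 1 = (1+σ) * (1+σ)⁻¹ := by rw [← h]
    rw [mul_inv_cancel₀ (ne_of_gt hs)] at h2
    linarith
  have key : ∀ m : ℕ, (1+σ) ^ (-(m:ℤ)) = ((1+σ)⁻¹) ^ m := by
    intro m
    rw [zpow_neg, zpow_natCast, ← inv_pow]
  unfold moranH
  rw [key, key, gS_geom, gS_geom, mul_div_mul_left _ _ hr1]

lemma moranQ_eq (N : ℕ) (hN : 1 ≤ N) (σ : ℝ) (hσ : -1 < σ) (hσ0 : σ ≠ 0)
    (i j : ℕ) (hi : 1 ≤ i) (hj : j ≠ 0) :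
    moranQ N σ i j = moranP N σ i j * gS (1+σ)⁻¹ j / gS (1+σ)⁻¹ i := by
  have hr : (0:ℝ) < (1+σ)⁻¹ := inv_pos.mpr (by linarith)
  have hSN : gS (1+σ)⁻¹ N ≠ 0 := ne_of_gt (gS_pos hr hN)
  have hSi : gS (1+σ)⁻¹ i ≠ 0 := ne_of_gt (gS_pos hr hi)
  unfold moranQ
  rw [if_neg hj, moranH_eq N σ hσ hσ0, moranH_eq N σ hσ hσ0, ← mul_div_assoc,
    div_div_div_cancel_right₀ hSN]

set_option maxHeartbeats 1000000 in
lemma term_bound (N : ℕ) (hN : 1 ≤ N) (σ : ℝ) (hσu : |σ| ≤ 1/2) (hσ0 : σ ≠ 0)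
    (i j : ℕ) (hi1 : 1 ≤ i) (hi2 : i ≤ N) (e : ℝ) (he : 0 < e) :
    |moranQ N σ i j * |(j:ℝ)/N - (i:ℝ)/N| ^ (2+e)| ≤
      (if j + 1 = i then ((9:ℝ)/4) * ((1:ℝ)/N) ^ (2+e) else 0)
        + (if j = i + 1 then ((9:ℝ)/4) * ((1:ℝ)/N) ^ (2+e) else 0) := by
  have hσl : -(1/2:ℝ) ≤ σ := by have := abs_le.mp hσu; linarith [this.1]
  have hσr : σ ≤ 1/2 := (abs_le.mp hσu).2
  have hσ1 : (-1:ℝ) < σ := by linarith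
  have hN0 : (0:ℝ) < N := by exact_mod_cast hN
  have hC0 : 0 ≤ ((9:ℝ)/4) * ((1:ℝ)/N) ^ (2+e) := by positivity
  have hR : 0 ≤ (if j + 1 = i then ((9:ℝ)/4) * ((1:ℝ)/N) ^ (2+e) else 0)
      + (if j = i + 1 then ((9:ℝ)/4) * ((1:ℝ)/N) ^ (2+e) else 0) := by
    split_ifs <;> linarith
  by_cases hj0 : j = 0
  · subst hj0
    have h0 : moranQ N σ i 0 = 0 := by unfold moranQ; rw [if_pos rfl]
    rw [h0, zero_mul, abs_zero]
    exact hR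
  rcases eq_or_lt_of_le hi2 with hiN | hiN
  · -- i = N
    subst hiN
    by_cases hjN : j = i
    · subst hjN
      rw [sub_self, abs_zero, Real.zero_rpow (by positivity), mul_zero, abs_zero]
      exact hR
    · have hq : moranQ i σ i j = 0 := by
        unfold moranQ moranP
        rw [if_neg hj0, if_pos (Or.inr rfl), if_neg hjN]
        ring
      rw [hq, zero_mul, abs_zero]
      exact hR
  -- 1 ≤ i < N
  have hq := moranQ_eq N hN σ hσ1 hσ0 i j hi1 hj0
  have hiA : ¬ (i = 0 ∨ i = N) := by omega
  have hr0 : (0:ℝ) < (1+σ)⁻¹ := inv_pos.mpr (by linarith)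
  have hr2 : (1+σ)⁻¹ ≤ 2 := by
    have hinv : (1+σ)⁻¹ * (1+σ) = 1 := inv_mul_cancel₀ (by linarith)
    have hprod : 0 ≤ (1+σ)⁻¹ * (1+σ - 1/2) := mul_nonneg hr0.le (by linarith)
    nlinarith
  have hSi : 0 < gS (1+σ)⁻¹ i := gS_pos hr0 hi1
  have hx0 : (0:ℝ) ≤ (i:ℝ)/N := by positivity
  have hx1 : (i:ℝ)/N ≤ 1 := by
    rw [div_le_one hN0]
    exact_mod_cast hi2
  have hd : (1:ℝ)/2 ≤ 1 + σ * ((i:ℝ)/N) := by nlinarith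
  by_cases hj1 : j = i + 1
  · subst hj1
    have hp : moranP N σ i (i+1)
        = (1 + σ) * ((i : ℝ) / N) * (1 - (i : ℝ) / N) / (1 + σ * ((i : ℝ) / N)) := by
      unfold moranP
      rw [if_neg hiA, if_pos rfl]
    have hp0 : 0 ≤ moranP N σ i (i+1) := by
      rw [hp]
      exact div_nonneg (mul_nonneg (mul_nonneg (by linarith) hx0)
        (by linarith)) (by linarith)
    have hp34 : moranP N σ i (i+1) ≤ 3/4 := by
      rw [hp, div_le_iff₀ (by linarith)]
      nlinarith [sq_nonneg (2*((i:ℝ)/N) - 1), mul_nonneg hx0 (by linarith : (0:ℝ) ≤ 1 - (i:ℝ)/N),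
        mul_nonneg (by linarith : (0:ℝ) ≤ σ + 1/2) hx0, mul_nonneg (by linarith : (0:ℝ) ≤ 1/2 - σ) hx0]
    have hSnn : 0 ≤ gS (1+σ)⁻¹ (i+1) := gS_nonneg hr0.le _
    have hS3 : gS (1+σ)⁻¹ (i+1) ≤ 3 * gS (1+σ)⁻¹ i := by
      have h := gS_succ_le hr0.le hi1
      nlinarith [mul_nonneg (by linarith : (0:ℝ) ≤ 2 - (1+σ)⁻¹) hSi.le]
    have hq0 : 0 ≤ moranQ N σ i (i+1) := by
      rw [hq]
      exact div_nonneg (mul_nonneg hp0 hSnn) hSi.le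
    have hq94 : moranQ N σ i (i+1) ≤ 9/4 := by
      rw [hq, div_le_iff₀ hSi]
      calc moranP N σ i (i+1) * gS (1+σ)⁻¹ (i+1)
          ≤ (3/4) * gS (1+σ)⁻¹ (i+1) := mul_le_mul_of_nonneg_right hp34 hSnn
        _ ≤ (3/4) * (3 * gS (1+σ)⁻¹ i) := by linarith
        _ = 9/4 * gS (1+σ)⁻¹ i := by ring
    have hdiff : |((i+1:ℕ):ℝ)/N - (i:ℝ)/N| = 1/N := by
      have h1 : ((i+1:ℕ):ℝ)/N - (i:ℝ)/N = 1/N := by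
        push_cast
        field_simp
        ring
      rw [h1, abs_of_pos (by positivity)]
    rw [hdiff, if_neg (by omega), if_pos rfl, abs_mul, abs_of_nonneg hq0,
      abs_of_nonneg (Real.rpow_nonneg (by positivity) _), zero_add]
    exact mul_le_mul_of_nonneg_right hq94 (Real.rpow_nonneg (by positivity) _)
  by_cases hj2 : j + 1 = i
  · -- j = i - 1, j ≥ 1
    have hji : i = j + 1 := hj2.symm
    subst hji
    have hp : moranP N σ (j+1) j
        = (((j+1:ℕ) : ℝ) / N) * (1 - ((j+1:ℕ) : ℝ) / N) / (1 + σ * (((j+1:ℕ) : ℝ) / N)) := by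
      unfold moranP
      rw [if_neg hiA, if_neg (by omega), if_pos rfl]
    have hx0' : (0:ℝ) ≤ ((j+1:ℕ):ℝ)/N := hx0
    have hx1' : ((j+1:ℕ):ℝ)/N ≤ 1 := hx1
    have hd' : (1:ℝ)/2 ≤ 1 + σ * (((j+1:ℕ):ℝ)/N) := hd
    have hp0 : 0 ≤ moranP N σ (j+1) j := by
      rw [hp]
      exact div_nonneg (mul_nonneg hx0' (by linarith)) (by linarith)
    have hp12 : moranP N σ (j+1) j ≤ 1/2 := by
      rw [hp, div_le_iff₀ (by linarith)]
      nlinarith [sq_nonneg (2*(((j+1:ℕ):ℝ)/N) - 1)]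
    have hSnn : 0 ≤ gS (1+σ)⁻¹ j := gS_nonneg hr0.le _
    have hSmono : gS (1+σ)⁻¹ j ≤ gS (1+σ)⁻¹ (j+1) := gS_mono hr0.le (by omega)
    have hq0 : 0 ≤ moranQ N σ (j+1) j := by
      rw [hq]
      exact div_nonneg (mul_nonneg hp0 hSnn) hSi.le
    have hq94 : moranQ N σ (j+1) j ≤ 9/4 := by
      rw [hq, div_le_iff₀ hSi]
      calc moranP N σ (j+1) j * gS (1+σ)⁻¹ j
          ≤ (1/2) * gS (1+σ)⁻¹ j := mul_le_mul_of_nonneg_right hp12 hSnn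
        _ ≤ 9/4 * gS (1+σ)⁻¹ (j+1) := by linarith
    have hdiff : |(j:ℝ)/N - ((j+1:ℕ):ℝ)/N| = 1/N := by
      have h1 : (j:ℝ)/N - ((j+1:ℕ):ℝ)/N = -(1/N) := by
        push_cast
        field_simp
        ring
      rw [h1, abs_neg, abs_of_pos (by positivity)]
    rw [hdiff, if_pos rfl, if_neg (by omega), add_zero, abs_mul, abs_of_nonneg hq0,
      abs_of_nonneg (Real.rpow_nonneg (by positivity) _)]
    exact mul_le_mul_of_nonneg_right hq94 (Real.rpow_nonneg (by positivity) _)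
  by_cases hj3 : j = i
  · subst hj3
    rw [sub_self, abs_zero, Real.zero_rpow (by positivity), mul_zero, abs_zero]
    exact hR
  · have hp : moranP N σ i j = 0 := by
      unfold moranP
      rw [if_neg hiA, if_neg hj1, if_neg hj2, if_neg hj3]
    rw [hq, hp, zero_mul, zero_div, zero_mul, abs_zero]
    exact hR

lemma main_bound (N : ℕ) (hN : 1 ≤ N) (σ : ℝ) (hσu : |σ| ≤ 1/2) (hσ0 : σ ≠ 0)
    (i : ℕ) (hi1 : 1 ≤ i) (hi2 : i ≤ N) (e : ℝ) (he : 0 < e) :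
    |(N:ℝ)^2 * ∑ j ∈ Finset.range (N+1),
        moranQ N σ i j * |(j:ℝ)/N - (i:ℝ)/N| ^ (2+e)| ≤ (9/2) * (N:ℝ) ^ (-e) := by
  have hN0 : (0:ℝ) < N := by exact_mod_cast hN
  set C := ((9:ℝ)/4) * ((1:ℝ)/N) ^ (2+e) with hCdef
  have hC0 : 0 ≤ C := by rw [hCdef]; positivity
  have hsum : |∑ j ∈ Finset.range (N+1), moranQ N σ i j * |(j:ℝ)/N - (i:ℝ)/N| ^ (2+e)|
      ≤ 2 * C := by
    calc |∑ j ∈ Finset.range (N+1), moranQ N σ i j * |(j:ℝ)/N - (i:ℝ)/N| ^ (2+e)|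
        ≤ ∑ j ∈ Finset.range (N+1), |moranQ N σ i j * |(j:ℝ)/N - (i:ℝ)/N| ^ (2+e)| :=
          Finset.abs_sum_le_sum_abs _ _
      _ ≤ ∑ j ∈ Finset.range (N+1),
            ((if j + 1 = i then C else 0) + (if j = i + 1 then C else 0)) :=
          Finset.sum_le_sum fun j _ => term_bound N hN σ hσu hσ0 i j hi1 hi2 e he
      _ = (∑ j ∈ Finset.range (N+1), if j + 1 = i then C else 0)
            + (∑ j ∈ Finset.range (N+1), if j = i + 1 then C else 0) :=
          Finset.sum_add_distrib
      _ ≤ C + C := by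
          gcongr
          · calc (∑ j ∈ Finset.range (N+1), if j + 1 = i then C else 0)
                = ∑ j ∈ Finset.range (N+1), if j = i - 1 then C else 0 :=
                Finset.sum_congr rfl fun j _ => if_congr (by omega) rfl rfl
              _ = if i - 1 ∈ Finset.range (N+1) then C else 0 :=
                Finset.sum_ite_eq' _ _ _
              _ ≤ C := by split_ifs <;> linarith
          · calc (∑ j ∈ Finset.range (N+1), if j = i + 1 then C else 0)
                = if i + 1 ∈ Finset.range (N+1) then C else 0 :=
                Finset.sum_ite_eq' _ _ _
              _ ≤ C := by split_ifs <;> linarith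
      _ = 2 * C := by ring
  have hpow : (N:ℝ)^2 * ((1:ℝ)/N) ^ (2+e) = (N:ℝ) ^ (-e) := by
    rw [one_div, ← Real.rpow_natCast (N:ℝ) 2, Real.inv_rpow hN0.le, ← Real.rpow_neg hN0.le,
      ← Real.rpow_add hN0]
    norm_num
  calc |(N:ℝ)^2 * ∑ j ∈ Finset.range (N+1), moranQ N σ i j * |(j:ℝ)/N - (i:ℝ)/N| ^ (2+e)|
      = (N:ℝ)^2 * |∑ j ∈ Finset.range (N+1), moranQ N σ i j * |(j:ℝ)/N - (i:ℝ)/N| ^ (2+e)| := by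
        rw [abs_mul, abs_of_nonneg (by positivity : (0:ℝ) ≤ (N:ℝ)^2)]
    _ ≤ (N:ℝ)^2 * (2 * C) := by
        exact mul_le_mul_of_nonneg_left hsum (by positivity)
    _ = (9/2) * ((N:ℝ)^2 * ((1:ℝ)/N) ^ (2+e)) := by rw [hCdef]; ring
    _ = (9/2) * (N:ℝ) ^ (-e) := by rw [hpow]

/-- Lindeberg condition for the dual chain: the scaled `(2+δ)`-moment of
the dual Moran chain increment converges to `0`, uniformly in `x` when
`i_N = min(⌊Nx⌋+1, N)`. -/
theorem moran_dual_lindeberg_limit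
    (γ : ℝ) (hγ : γ ≠ 0) (δ : ℝ) (hδ : 0 < δ) (σ : ℕ → ℝ)
    (hσ1 : ∀ N, σ N > -1) (hσ2 : ∀ N, σ N ≠ 0)
    (hσγ : Tendsto (fun N : ℕ => (N : ℝ) * σ N) atTop (nhds γ))
    (i : ℕ → ℕ) (hi1 : ∀ N, 1 ≤ i N) (hi2 : ∀ N, i N ≤ N)
    (x : ℝ) (hx : x ∈ Set.Icc (0 : ℝ) 1)
    (hix : Tendsto (fun N : ℕ => (i N : ℝ) / N) atTop (nhds x)) :
    Tendsto (fun N : ℕ => (N : ℝ) ^ 2 *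
        ∑ j ∈ Finset.range (N + 1),
          moranQ N (σ N) (i N) j * |(j : ℝ) / N - (i N : ℝ) / N| ^ (2 + δ))
      atTop (nhds 0)
    ∧ TendstoUniformlyOn
        (fun (N : ℕ) (y : ℝ) => (N : ℝ) ^ 2 *
          ∑ j ∈ Finset.range (N + 1),
            moranQ N (σ N) (min (⌊(N : ℝ) * y⌋₊ + 1) N) j *
              |(j : ℝ) / N - ((min (⌊(N : ℝ) * y⌋₊ + 1) N : ℕ) : ℝ) / N| ^ (2 + δ))
        (fun _ => 0) atTop (Set.Icc 0 1) := by
  have hσ0 : Tendsto σ atTop (nhds 0) := by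
    have h1 : Tendsto (fun N : ℕ => ((N:ℝ) * σ N) * (1/(N:ℝ))) atTop (nhds (γ * 0)) :=
      hσγ.mul tendsto_one_div_atTop_nhds_zero_nat
    rw [mul_zero] at h1
    apply h1.congr'
    filter_upwards [eventually_ge_atTop 1] with N hN
    have hN' : (N:ℝ) ≠ 0 := Nat.cast_ne_zero.mpr (by omega)
    field_simp
  have hsmall : ∀ᶠ N : ℕ in atTop, |σ N| ≤ 1/2 := by
    have hball : ∀ᶠ y in nhds (0:ℝ), |y| ≤ 1/2 := by
      filter_upwards [Metric.ball_mem_nhds (0:ℝ) (by norm_num : (0:ℝ) < 1/2)] with y hy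
      rw [Metric.mem_ball, Real.dist_eq, sub_zero] at hy
      linarith
    exact hσ0.eventually hball
  have key : ∀ᶠ N : ℕ in atTop, ∀ i0 : ℕ, 1 ≤ i0 → i0 ≤ N →
      |(N:ℝ)^2 * ∑ j ∈ Finset.range (N+1),
        moranQ N (σ N) i0 j * |(j:ℝ)/N - (i0:ℝ)/N| ^ (2+δ)| ≤ (9/2) * (N:ℝ) ^ (-δ) := by
    filter_upwards [hsmall, eventually_ge_atTop 1] with N h1 h2 i0 hi0a hi0b
    exact main_bound N h2 (σ N) h1 (hσ2 N) i0 hi0a hi0b δ hδ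
  have hg : Tendsto (fun N : ℕ => (9/2 : ℝ) * (N:ℝ)^(-δ)) atTop (nhds 0) := by
    have h := ((tendsto_rpow_neg_atTop hδ).comp tendsto_natCast_atTop_atTop).const_mul (9/2 : ℝ)
    simpa using h
  constructor
  · apply squeeze_zero_norm' ?_ hg
    filter_upwards [key] with N hk
    rw [Real.norm_eq_abs]
    exact hk (i N) (hi1 N) (hi2 N)
  · rw [Metric.tendstoUniformlyOn_iff]
    intro ε hε
    filter_upwards [key, hg.eventually (gt_mem_nhds hε), eventually_ge_atTop 1]
      with N hk hlt hN1 y hy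
    rw [dist_zero_left, Real.norm_eq_abs]
    calc |(N:ℝ)^2 * ∑ j ∈ Finset.range (N+1),
          moranQ N (σ N) (min (⌊(N : ℝ) * y⌋₊ + 1) N) j *
            |(j:ℝ)/N - ((min (⌊(N : ℝ) * y⌋₊ + 1) N : ℕ):ℝ)/N| ^ (2+δ)|
        ≤ (9/2) * (N:ℝ)^(-δ) :=
          hk _ (le_min (Nat.succ_le_succ (Nat.zero_le _)) hN1) (min_le_right _ _)
      _ < ε := hlt
end

section
/- Let γ be real, s(x) = ∫₀ˣ e^{−γu} du (so s(x) = (1 − e^{−γx})/γ when γ ≠ 0 and s(x) = x when γ = 0), m′(y) = e^{γy}/(y(1−y)) for 0 < y < 1, and g(x,y) = (s(1) − s(max(x,y)))·s(min(x,y))/s(1). Then for every continuous f : [0,1] → ℝ, the function h(x) = ∫₀¹ g(x,y)·f(y)·m′(y) dy is well defined (the integral converges absolutely for every x ∈ [0,1]), h is continuous on [0,1] with h(0) = h(1) = 0, h is twice continuously differentiable on (0,1), and x(1−x)h''(x) + γ x(1−x)h'(x) = −f(x) for all 0 < x < 1. -/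
open MeasureTheory

/-- The scale function `s(x) = ∫₀ˣ e^{−γu} du`. -/
noncomputable def sFn (γ x : ℝ) : ℝ := ∫ u in (0 : ℝ)..x, Real.exp (-(γ * u))

/-- The speed density `m′(y) = e^{γy}/(y(1−y))`. -/
noncomputable def mDens (γ y : ℝ) : ℝ := Real.exp (γ * y) / (y * (1 - y))

/-- The Green function `g(x,y) = (s(1) − s(max x y)) s(min x y)/s(1)`. -/
noncomputable def gFn (γ x y : ℝ) : ℝ :=
  (sFn γ 1 - sFn γ (max x y)) * sFn γ (min x y) / sFn γ 1

/-- `h(x) = ∫₀¹ g(x,y) f(y) m′(y) dy`, the Green operator applied to `f`. -/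
noncomputable def greenOp (γ : ℝ) (f : ℝ → ℝ) (x : ℝ) : ℝ :=
  ∫ y in (0 : ℝ)..1, gFn γ x y * f y * mDens γ y

lemma expg_cont (γ : ℝ) : Continuous (fun u : ℝ => Real.exp (-(γ * u))) := by
  continuity

lemma sFn_hasDerivAt (γ x : ℝ) : HasDerivAt (sFn γ) (Real.exp (-(γ * x))) x := by
  refine intervalIntegral.integral_hasDerivAt_right
    ((expg_cont γ).intervalIntegrable 0 x)
    ((expg_cont γ).stronglyMeasurableAtFilter _ _)
    (expg_cont γ).continuousAt

lemma sFn_zero (γ : ℝ) : sFn γ 0 = 0 := intervalIntegral.integral_same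

lemma sFn_continuous (γ : ℝ) : Continuous (sFn γ) := by
  have : Differentiable ℝ (sFn γ) := fun x => (sFn_hasDerivAt γ x).differentiableAt
  exact this.continuous

lemma sFn_strictMono (γ : ℝ) : StrictMono (sFn γ) :=
  strictMono_of_deriv_pos (fun x => by
    rw [(sFn_hasDerivAt γ x).deriv]; exact Real.exp_pos _)

lemma sFn_one_pos (γ : ℝ) : 0 < sFn γ 1 := by
  have := sFn_strictMono γ (show (0:ℝ) < 1 by norm_num)
  rwa [sFn_zero] at this

lemma sFn_le (γ : ℝ) {y : ℝ} (h0 : 0 ≤ y) (h1 : y ≤ 1) :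
    sFn γ y ≤ Real.exp |γ| * y := by
  have : sFn γ y ≤ ∫ u in (0:ℝ)..y, Real.exp |γ| := by
    apply intervalIntegral.integral_mono_on h0
      ((expg_cont γ).intervalIntegrable 0 y) (intervalIntegrable_const)
    intro u hu
    apply Real.exp_le_exp.2
    have : |(-(γ * u))| ≤ |γ| := by
      rw [abs_neg, abs_mul]
      calc |γ| * |u| ≤ |γ| * 1 := by
            apply mul_le_mul_of_nonneg_left _ (abs_nonneg γ)
            rw [abs_le]; constructor <;> [linarith [hu.1]; linarith [hu.2]]
        _ = |γ| := mul_one _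
    linarith [abs_le.1 this]
  simpa [mul_comm] using this

lemma sFn_sub_le (γ : ℝ) {y : ℝ} (h0 : 0 ≤ y) (h1 : y ≤ 1) :
    sFn γ 1 - sFn γ y ≤ Real.exp |γ| * (1 - y) := by
  have hsub : sFn γ 1 - sFn γ y = ∫ u in y..(1:ℝ), Real.exp (-(γ * u)) := by
    rw [sFn, sFn, intervalIntegral.integral_interval_sub_left
      ((expg_cont γ).intervalIntegrable 0 1) ((expg_cont γ).intervalIntegrable 0 y)]
  rw [hsub]
  have : (∫ u in y..(1:ℝ), Real.exp (-(γ * u))) ≤ ∫ u in y..(1:ℝ), Real.exp |γ| := by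
    apply intervalIntegral.integral_mono_on h1
      ((expg_cont γ).intervalIntegrable y 1) (intervalIntegrable_const)
    intro u hu
    apply Real.exp_le_exp.2
    have : |(-(γ * u))| ≤ |γ| := by
      rw [abs_neg, abs_mul]
      calc |γ| * |u| ≤ |γ| * 1 := by
            apply mul_le_mul_of_nonneg_left _ (abs_nonneg γ)
            rw [abs_le]; constructor <;> [linarith [hu.1, h0]; linarith [hu.2]]
        _ = |γ| := mul_one _
    linarith [abs_le.1 this]
  simpa [mul_comm] using this

lemma sFn_nonneg (γ : ℝ) {y : ℝ} (h0 : 0 ≤ y) : 0 ≤ sFn γ y := by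
  have := (sFn_strictMono γ).monotone h0
  rwa [sFn_zero] at this

lemma sFn_le_one (γ : ℝ) {y : ℝ} (h1 : y ≤ 1) : sFn γ y ≤ sFn γ 1 :=
  (sFn_strictMono γ).monotone h1

lemma exp_gy_le (γ : ℝ) {y : ℝ} (h0 : 0 ≤ y) (h1 : y ≤ 1) :
    Real.exp (γ * y) ≤ Real.exp |γ| := by
  apply Real.exp_le_exp.2
  calc γ * y ≤ |γ * y| := le_abs_self _
    _ = |γ| * |y| := abs_mul _ _
    _ ≤ |γ| * 1 := by
        apply mul_le_mul_of_nonneg_left _ (abs_nonneg γ)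
        rw [abs_le]; constructor <;> linarith
    _ = |γ| := mul_one _

lemma mDens_pos (γ : ℝ) {y : ℝ} (h0 : 0 < y) (h1 : y < 1) : 0 < mDens γ y :=
  div_pos (Real.exp_pos _) (by nlinarith)

/-- Uniform bound for `g(x,y) m'(y)`. -/
lemma g_mul_mDens_bound (γ : ℝ) {x y : ℝ} (hx : x ∈ Set.Icc (0:ℝ) 1)
    (hy : y ∈ Set.Ioc (0:ℝ) 1) :
    |gFn γ x y * mDens γ y| ≤ Real.exp |γ| ^ 3 / sFn γ 1 := by
  set E := Real.exp |γ| with hE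
  have hE1 : 1 ≤ E := by rw [hE]; simpa using Real.one_le_exp (abs_nonneg γ)
  have hE0 : 0 < E := lt_of_lt_of_le one_pos hE1
  have hs1 : 0 < sFn γ 1 := sFn_one_pos γ
  rcases eq_or_lt_of_le hy.2 with h1 | hylt
  · -- y = 1 : mDens = 0
    have : mDens γ y = 0 := by
      rw [mDens, h1]; norm_num
    rw [this, mul_zero, abs_zero]
    positivity
  · have hy0 : 0 < y := hy.1
    have hmin0 : 0 ≤ min x y := le_min hx.1 hy0.le
    have hminy : min x y ≤ y := min_le_right _ _
    have hmaxy : y ≤ max x y := le_max_right _ _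
    have hmax1 : max x y ≤ 1 := max_le hx.2 hy.2
    have hsa : 0 ≤ sFn γ (min x y) := sFn_nonneg γ hmin0
    have hsa' : sFn γ (min x y) ≤ E * y :=
      le_trans ((sFn_strictMono γ).monotone hminy) (sFn_le γ hy0.le hy.2)
    have hsb : 0 ≤ sFn γ 1 - sFn γ (max x y) := by
      have := sFn_le_one γ hmax1; linarith
    have hsb' : sFn γ 1 - sFn γ (max x y) ≤ E * (1 - y) := by
      have := (sFn_strictMono γ).monotone hmaxy
      have h2 := sFn_sub_le γ hy0.le hy.2
      linarith
    have hm : 0 < mDens γ y := mDens_pos γ hy0 hylt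
    have hg : 0 ≤ gFn γ x y := by
      rw [gFn]; positivity
    rw [abs_of_nonneg (mul_nonneg hg hm.le)]
    have hexp : Real.exp (γ * y) ≤ E := exp_gy_le γ hy0.le hy.2
    have key : gFn γ x y * mDens γ y ≤
        ((E * (1 - y)) * (E * y) / sFn γ 1) * (E / (y * (1 - y))) := by
      rw [gFn, mDens]
      have hden : 0 < y * (1 - y) := by nlinarith
      gcongr <;> first
        | exact hexp
        | positivity
        | (apply div_nonneg _ hs1.le; nlinarith)
        | nlinarith
    calc gFn γ x y * mDens γ y ≤ ((E * (1 - y)) * (E * y) / sFn γ 1) * (E / (y * (1 - y))) := key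
      _ = E ^ 3 / sFn γ 1 := by
          have h1y : (1:ℝ) - y ≠ 0 := by linarith
          have hyne : y ≠ 0 := ne_of_gt hy0
          field_simp

lemma mDens_measurable (γ : ℝ) : Measurable (mDens γ) :=
  (Real.continuous_exp.comp (continuous_const.mul continuous_id)).measurable.div
    ((continuous_id.mul (continuous_const.sub continuous_id)).measurable)

lemma gFn_continuous_y (γ x : ℝ) : Continuous (fun y => gFn γ x y) := by
  apply Continuous.div_const
  exact (continuous_const.sub ((sFn_continuous γ).comp (continuous_const.max continuous_id))).mul
    ((sFn_continuous γ).comp (continuous_const.min continuous_id))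

lemma gFn_continuous_x (γ y : ℝ) : Continuous (fun x => gFn γ x y) := by
  apply Continuous.div_const
  exact (continuous_const.sub ((sFn_continuous γ).comp (continuous_id.max continuous_const))).mul
    ((sFn_continuous γ).comp (continuous_id.min continuous_const))

lemma f_aesm {f : ℝ → ℝ} (hf : ContinuousOn f (Set.Icc 0 1)) {S : Set ℝ}
    (hS : S ⊆ Set.Icc 0 1) :
    AEStronglyMeasurable f (volume.restrict S) :=
  (hf.aestronglyMeasurable measurableSet_Icc).mono_measure
    (Measure.restrict_mono hS le_rfl)

lemma s_mul_mDens_bound (γ : ℝ) {x y : ℝ} (hx : x < 1) (hy : y ∈ Set.Ioc (0:ℝ) x) :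
    |sFn γ y * mDens γ y| ≤ Real.exp |γ| ^ 2 / (1 - x) := by
  set E := Real.exp |γ| with hE
  have hE0 : 0 < E := Real.exp_pos _
  have hy0 : 0 < y := hy.1
  have hy1 : y < 1 := lt_of_le_of_lt hy.2 hx
  have h1y : 0 < 1 - y := by linarith
  have h1x : 0 < 1 - x := by linarith
  have hm : 0 < mDens γ y := div_pos (Real.exp_pos _) (by nlinarith)
  have hs : 0 ≤ sFn γ y := sFn_nonneg γ hy0.le
  rw [abs_of_nonneg (mul_nonneg hs hm.le)]
  have key : sFn γ y * mDens γ y ≤ (E * y) * (E / (y * (1 - y))) := by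
    rw [mDens]
    gcongr <;> first
      | exact sFn_le γ hy0.le hy1.le
      | exact exp_gy_le γ hy0.le hy1.le
      | positivity
      | nlinarith
  calc sFn γ y * mDens γ y ≤ (E * y) * (E / (y * (1 - y))) := key
    _ = E ^ 2 / (1 - y) := by field_simp
    _ ≤ E ^ 2 / (1 - x) := by gcongr <;> linarith [hy.2]

lemma sub_mul_mDens_bound (γ : ℝ) {x y : ℝ} (hx : 0 < x) (hy : y ∈ Set.Ioc x 1) :
    |(sFn γ 1 - sFn γ y) * mDens γ y| ≤ Real.exp |γ| ^ 2 / x := by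
  set E := Real.exp |γ| with hE
  have hE0 : 0 < E := Real.exp_pos _
  have hy0 : 0 < y := lt_trans hx hy.1
  rcases eq_or_lt_of_le hy.2 with h1 | hy1
  · have : mDens γ y = 0 := by rw [mDens, h1]; norm_num
    rw [this, mul_zero, abs_zero]; positivity
  · have h1y : 0 < 1 - y := by linarith
    have hm : 0 < mDens γ y := div_pos (Real.exp_pos _) (by nlinarith)
    have hs : 0 ≤ sFn γ 1 - sFn γ y := by have := sFn_le_one γ hy1.le; linarith
    rw [abs_of_nonneg (mul_nonneg hs hm.le)]
    have key : (sFn γ 1 - sFn γ y) * mDens γ y ≤ (E * (1 - y)) * (E / (y * (1 - y))) := by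
      rw [mDens]
      gcongr <;> first
        | exact sFn_sub_le γ hy0.le hy1.le
        | exact exp_gy_le γ hy0.le hy1.le
        | positivity
        | nlinarith
    calc (sFn γ 1 - sFn γ y) * mDens γ y ≤ (E * (1 - y)) * (E / (y * (1 - y))) := key
      _ = E ^ 2 / y := by field_simp
      _ ≤ E ^ 2 / x := by gcongr <;> linarith [hy.1]

/-- Integrability of the main integrand on any subinterval of `[0,1]`. -/
lemma main_integrable (γ : ℝ) {f : ℝ → ℝ} (hf : ContinuousOn f (Set.Icc 0 1))
    {M : ℝ} (hM : ∀ y ∈ Set.Icc (0:ℝ) 1, |f y| ≤ M)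
    {x a b : ℝ} (hx : x ∈ Set.Icc (0:ℝ) 1) (h0a : 0 ≤ a) (hab : a ≤ b) (hb1 : b ≤ 1) :
    IntervalIntegrable (fun y => gFn γ x y * f y * mDens γ y) volume a b := by
  rw [intervalIntegrable_iff, Set.uIoc_of_le hab]
  have hsub : Set.Ioc a b ⊆ Set.Icc (0:ℝ) 1 := fun y hy =>
    ⟨le_trans h0a hy.1.le, le_trans hy.2 hb1⟩
  have hsub' : Set.Ioc a b ⊆ Set.Ioc (0:ℝ) 1 := fun y hy =>
    ⟨lt_of_le_of_lt h0a hy.1, le_trans hy.2 hb1⟩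
  apply Integrable.mono' (g := fun _ => Real.exp |γ| ^ 3 / sFn γ 1 * M)
    (integrableOn_const measure_Ioc_lt_top.ne)
  · exact (((gFn_continuous_y γ x).aestronglyMeasurable.mul
      (f_aesm hf hsub)).mul (mDens_measurable γ).aestronglyMeasurable.restrict)
  · filter_upwards [ae_restrict_mem measurableSet_Ioc] with y hy
    have h1 : |gFn γ x y * mDens γ y| ≤ Real.exp |γ| ^ 3 / sFn γ 1 :=
      g_mul_mDens_bound γ hx (hsub' hy)
    have h2 : |f y| ≤ M := hM y (hsub hy)
    calc ‖gFn γ x y * f y * mDens γ y‖ = |gFn γ x y * mDens γ y| * |f y| := by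
          rw [Real.norm_eq_abs, ← abs_mul]; ring_nf
      _ ≤ Real.exp |γ| ^ 3 / sFn γ 1 * M :=
          mul_le_mul h1 h2 (abs_nonneg _) (le_trans (abs_nonneg _) h1)

lemma phi_integrable (γ : ℝ) {f : ℝ → ℝ} (hf : ContinuousOn f (Set.Icc 0 1))
    {M : ℝ} (hM : ∀ y ∈ Set.Icc (0:ℝ) 1, |f y| ≤ M)
    {x : ℝ} (hx : x ∈ Set.Ioo (0:ℝ) 1) :
    IntervalIntegrable (fun y => sFn γ y * f y * mDens γ y) volume 0 x := by
  rw [intervalIntegrable_iff, Set.uIoc_of_le hx.1.le]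
  have hsub : Set.Ioc 0 x ⊆ Set.Icc (0:ℝ) 1 := fun y hy =>
    ⟨hy.1.le, le_trans hy.2 hx.2.le⟩
  apply Integrable.mono' (g := fun _ => Real.exp |γ| ^ 2 / (1 - x) * M)
    (integrableOn_const measure_Ioc_lt_top.ne)
  · exact (((sFn_continuous γ).aestronglyMeasurable.mul
      (f_aesm hf hsub)).mul (mDens_measurable γ).aestronglyMeasurable.restrict)
  · filter_upwards [ae_restrict_mem measurableSet_Ioc] with y hy
    have h1 : |sFn γ y * mDens γ y| ≤ Real.exp |γ| ^ 2 / (1 - x) :=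
      s_mul_mDens_bound γ hx.2 hy
    have h2 : |f y| ≤ M := hM y (hsub hy)
    calc ‖sFn γ y * f y * mDens γ y‖ = |sFn γ y * mDens γ y| * |f y| := by
          rw [Real.norm_eq_abs, ← abs_mul]; ring_nf
      _ ≤ Real.exp |γ| ^ 2 / (1 - x) * M :=
          mul_le_mul h1 h2 (abs_nonneg _) (le_trans (abs_nonneg _) h1)

lemma psi_integrable (γ : ℝ) {f : ℝ → ℝ} (hf : ContinuousOn f (Set.Icc 0 1))
    {M : ℝ} (hM : ∀ y ∈ Set.Icc (0:ℝ) 1, |f y| ≤ M)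
    {x : ℝ} (hx : x ∈ Set.Ioo (0:ℝ) 1) :
    IntervalIntegrable (fun y => (sFn γ 1 - sFn γ y) * f y * mDens γ y) volume x 1 := by
  rw [intervalIntegrable_iff, Set.uIoc_of_le hx.2.le]
  have hsub : Set.Ioc x 1 ⊆ Set.Icc (0:ℝ) 1 := fun y hy =>
    ⟨le_trans hx.1.le hy.1.le, hy.2⟩
  apply Integrable.mono' (g := fun _ => Real.exp |γ| ^ 2 / x * M)
    (integrableOn_const measure_Ioc_lt_top.ne)
  · exact (((continuous_const.sub (sFn_continuous γ)).aestronglyMeasurable.mul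
      (f_aesm hf hsub)).mul (mDens_measurable γ).aestronglyMeasurable.restrict)
  · filter_upwards [ae_restrict_mem measurableSet_Ioc] with y hy
    have h1 : |(sFn γ 1 - sFn γ y) * mDens γ y| ≤ Real.exp |γ| ^ 2 / x :=
      sub_mul_mDens_bound γ hx.1 hy
    have h2 : |f y| ≤ M := hM y (hsub hy)
    calc ‖(sFn γ 1 - sFn γ y) * f y * mDens γ y‖
          = |(sFn γ 1 - sFn γ y) * mDens γ y| * |f y| := by
          rw [Real.norm_eq_abs, ← abs_mul]; ring_nf
      _ ≤ Real.exp |γ| ^ 2 / x * M :=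
          mul_le_mul h1 h2 (abs_nonneg _) (le_trans (abs_nonneg _) h1)

lemma greenOp_continuousOn (γ : ℝ) {f : ℝ → ℝ} (hf : ContinuousOn f (Set.Icc 0 1))
    {M : ℝ} (hM : ∀ y ∈ Set.Icc (0:ℝ) 1, |f y| ≤ M) :
    ContinuousOn (greenOp γ f) (Set.Icc 0 1) := by
  intro x₀ hx₀
  apply intervalIntegral.continuousWithinAt_of_dominated_interval
    (bound := fun _ => Real.exp |γ| ^ 3 / sFn γ 1 * M)
  · apply Filter.Eventually.of_forall
    intro x
    rw [Set.uIoc_of_le (zero_le_one' ℝ)]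
    exact (((gFn_continuous_y γ x).aestronglyMeasurable.mul
      (f_aesm hf Set.Ioc_subset_Icc_self)).mul
      (mDens_measurable γ).aestronglyMeasurable.restrict)
  · apply Filter.eventually_of_mem self_mem_nhdsWithin
    intro x hx
    apply ae_of_all
    intro t ht
    rw [Set.uIoc_of_le (zero_le_one' ℝ)] at ht
    have h1 := g_mul_mDens_bound γ hx ht
    have h2 := hM t (Set.Ioc_subset_Icc_self ht)
    calc ‖gFn γ x t * f t * mDens γ t‖ = |gFn γ x t * mDens γ t| * |f t| := by
          rw [Real.norm_eq_abs, ← abs_mul]; ring_nf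
      _ ≤ Real.exp |γ| ^ 3 / sFn γ 1 * M :=
          mul_le_mul h1 h2 (abs_nonneg _) (le_trans (abs_nonneg _) h1)
  · exact intervalIntegrable_const
  · apply ae_of_all
    intro t _
    exact (((gFn_continuous_x γ t).mul continuous_const).mul
      continuous_const).continuousWithinAt

lemma greenOp_zero (γ : ℝ) (f : ℝ → ℝ) : greenOp γ f 0 = 0 := by
  rw [greenOp]
  rw [intervalIntegral.integral_congr (g := fun _ => (0:ℝ)) ?_, intervalIntegral.integral_zero]
  intro y hy
  rw [Set.uIcc_of_le (zero_le_one' ℝ)] at hy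
  have : min (0:ℝ) y = 0 := min_eq_left hy.1
  simp [gFn, this, sFn_zero]

lemma greenOp_one (γ : ℝ) (f : ℝ → ℝ) : greenOp γ f 1 = 0 := by
  rw [greenOp]
  rw [intervalIntegral.integral_congr (g := fun _ => (0:ℝ)) ?_, intervalIntegral.integral_zero]
  intro y hy
  rw [Set.uIcc_of_le (zero_le_one' ℝ)] at hy
  have : max (1:ℝ) y = 1 := max_eq_left hy.2
  simp [gFn, this]

noncomputable def Aint (γ : ℝ) (f : ℝ → ℝ) (x : ℝ) : ℝ :=
  ∫ y in (0:ℝ)..x, sFn γ y * f y * mDens γ y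
noncomputable def Bint (γ : ℝ) (f : ℝ → ℝ) (x : ℝ) : ℝ :=
  ∫ y in x..(1:ℝ), (sFn γ 1 - sFn γ y) * f y * mDens γ y

lemma greenOp_repr (γ : ℝ) {f : ℝ → ℝ} (hf : ContinuousOn f (Set.Icc 0 1))
    {M : ℝ} (hM : ∀ y ∈ Set.Icc (0:ℝ) 1, |f y| ≤ M)
    {x : ℝ} (hx : x ∈ Set.Ioo (0:ℝ) 1) :
    greenOp γ f x = (sFn γ 1 - sFn γ x) / sFn γ 1 * Aint γ f x
      + sFn γ x / sFn γ 1 * Bint γ f x := by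
  have hx' : x ∈ Set.Icc (0:ℝ) 1 := Set.mem_Icc_of_Ioo hx
  have hsplit : greenOp γ f x
      = (∫ y in (0:ℝ)..x, gFn γ x y * f y * mDens γ y)
        + ∫ y in x..(1:ℝ), gFn γ x y * f y * mDens γ y := by
    rw [greenOp]
    exact (intervalIntegral.integral_add_adjacent_intervals
      (main_integrable γ hf hM hx' le_rfl hx.1.le hx.2.le)
      (main_integrable γ hf hM hx' hx.1.le hx.2.le le_rfl)).symm
  rw [hsplit]
  congr 1
  · rw [intervalIntegral.integral_congr
      (g := fun y => (sFn γ 1 - sFn γ x) / sFn γ 1 * (sFn γ y * f y * mDens γ y)) ?_,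
      intervalIntegral.integral_const_mul]
    · rfl
    · intro y hy
      rw [Set.uIcc_of_le hx.1.le] at hy
      simp only [gFn, max_eq_left hy.2, min_eq_right hy.2]
      ring
  · rw [intervalIntegral.integral_congr
      (g := fun y => sFn γ x / sFn γ 1 * ((sFn γ 1 - sFn γ y) * f y * mDens γ y)) ?_,
      intervalIntegral.integral_const_mul]
    · rfl
    · intro y hy
      rw [Set.uIcc_of_le hx.2.le] at hy
      simp only [gFn, max_eq_right hy.1, min_eq_left hy.1]
      ring

lemma mDens_continuousOn (γ : ℝ) : ContinuousOn (mDens γ) (Set.Ioo 0 1) := by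
  apply ContinuousOn.div
  · exact (Real.continuous_exp.comp (continuous_const.mul continuous_id)).continuousOn
  · exact (continuous_id.mul (continuous_const.sub continuous_id)).continuousOn
  · intro y hy
    have h1 : 0 < y := hy.1
    have h2 : y < 1 := hy.2
    exact ne_of_gt (by nlinarith)

lemma phi_continuousOn (γ : ℝ) {f : ℝ → ℝ} (hf : ContinuousOn f (Set.Icc 0 1)) :
    ContinuousOn (fun y => sFn γ y * f y * mDens γ y) (Set.Ioo 0 1) :=
  (((sFn_continuous γ).continuousOn.mul (hf.mono Set.Ioo_subset_Icc_self)).mul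
    (mDens_continuousOn γ))

lemma psi_continuousOn (γ : ℝ) {f : ℝ → ℝ} (hf : ContinuousOn f (Set.Icc 0 1)) :
    ContinuousOn (fun y => (sFn γ 1 - sFn γ y) * f y * mDens γ y) (Set.Ioo 0 1) :=
  (((continuous_const.sub (sFn_continuous γ)).continuousOn.mul
    (hf.mono Set.Ioo_subset_Icc_self)).mul (mDens_continuousOn γ))

lemma Aint_hasDerivAt (γ : ℝ) {f : ℝ → ℝ} (hf : ContinuousOn f (Set.Icc 0 1))
    {M : ℝ} (hM : ∀ y ∈ Set.Icc (0:ℝ) 1, |f y| ≤ M)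
    {x : ℝ} (hx : x ∈ Set.Ioo (0:ℝ) 1) :
    HasDerivAt (Aint γ f) (sFn γ x * f x * mDens γ x) x := by
  apply intervalIntegral.integral_hasDerivAt_right (phi_integrable γ hf hM hx)
  · exact (phi_continuousOn γ hf).stronglyMeasurableAtFilter isOpen_Ioo _ hx
  · exact (phi_continuousOn γ hf).continuousAt (Ioo_mem_nhds hx.1 hx.2)

lemma Bint_hasDerivAt (γ : ℝ) {f : ℝ → ℝ} (hf : ContinuousOn f (Set.Icc 0 1))
    {M : ℝ} (hM : ∀ y ∈ Set.Icc (0:ℝ) 1, |f y| ≤ M)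
    {x : ℝ} (hx : x ∈ Set.Ioo (0:ℝ) 1) :
    HasDerivAt (Bint γ f) (-((sFn γ 1 - sFn γ x) * f x * mDens γ x)) x := by
  apply intervalIntegral.integral_hasDerivAt_left (psi_integrable γ hf hM hx)
  · exact (psi_continuousOn γ hf).stronglyMeasurableAtFilter isOpen_Ioo _ hx
  · exact (psi_continuousOn γ hf).continuousAt (Ioo_mem_nhds hx.1 hx.2)

noncomputable def Gfun (γ : ℝ) (f : ℝ → ℝ) (x : ℝ) : ℝ :=
  Real.exp (-(γ * x)) * (Bint γ f x - Aint γ f x) / sFn γ 1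

lemma greenOp_hasDerivAt (γ : ℝ) {f : ℝ → ℝ} (hf : ContinuousOn f (Set.Icc 0 1))
    {M : ℝ} (hM : ∀ y ∈ Set.Icc (0:ℝ) 1, |f y| ≤ M)
    {x : ℝ} (hx : x ∈ Set.Ioo (0:ℝ) 1) :
    HasDerivAt (greenOp γ f) (Gfun γ f x) x := by
  have hA := Aint_hasDerivAt γ hf hM hx
  have hB := Bint_hasDerivAt γ hf hM hx
  have hs := sFn_hasDerivAt γ x
  have h1 : HasDerivAt (fun x => (sFn γ 1 - sFn γ x) / sFn γ 1 * Aint γ f x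
      + sFn γ x / sFn γ 1 * Bint γ f x)
      (((0 - Real.exp (-(γ * x))) / sFn γ 1) * Aint γ f x
        + (sFn γ 1 - sFn γ x) / sFn γ 1 * (sFn γ x * f x * mDens γ x)
        + ((Real.exp (-(γ * x)) / sFn γ 1) * Bint γ f x
          + sFn γ x / sFn γ 1 * -((sFn γ 1 - sFn γ x) * f x * mDens γ x))) x :=
    (((((hasDerivAt_const x (sFn γ 1)).sub hs).div_const (sFn γ 1)).mul hA).add
      (((hs.div_const (sFn γ 1)).mul hB)))
  have h2 : HasDerivAt (fun x => (sFn γ 1 - sFn γ x) / sFn γ 1 * Aint γ f x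
      + sFn γ x / sFn γ 1 * Bint γ f x) (Gfun γ f x) x := by
    convert h1 using 1
    simp only [Gfun]
    ring
  apply h2.congr_of_eventuallyEq
  filter_upwards [Ioo_mem_nhds hx.1 hx.2] with z hz
  exact greenOp_repr γ hf hM hz

noncomputable def Gfun2 (γ : ℝ) (f : ℝ → ℝ) (x : ℝ) : ℝ :=
  (-γ * Real.exp (-(γ * x)) * (Bint γ f x - Aint γ f x)
    + Real.exp (-(γ * x)) * (-((sFn γ 1 - sFn γ x) * f x * mDens γ x)
        - sFn γ x * f x * mDens γ x)) / sFn γ 1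

lemma Gfun_hasDerivAt (γ : ℝ) {f : ℝ → ℝ} (hf : ContinuousOn f (Set.Icc 0 1))
    {M : ℝ} (hM : ∀ y ∈ Set.Icc (0:ℝ) 1, |f y| ≤ M)
    {x : ℝ} (hx : x ∈ Set.Ioo (0:ℝ) 1) :
    HasDerivAt (Gfun γ f) (Gfun2 γ f x) x := by
  have hA := Aint_hasDerivAt γ hf hM hx
  have hB := Bint_hasDerivAt γ hf hM hx
  have hexp : HasDerivAt (fun x : ℝ => Real.exp (-(γ * x)))
      (-γ * Real.exp (-(γ * x))) x := by
    have h0 : HasDerivAt (fun x : ℝ => -(γ * x)) (-γ) x := by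
      exact (((hasDerivAt_id' x).const_mul γ).neg).congr_deriv (by ring)
    simpa [mul_comm] using h0.exp
  have h := ((hexp.mul (hB.sub hA)).div_const (sFn γ 1))
  exact h

/-- for continuous `f` on `[0,1]`, `h(x) = ∫₀¹ g(x,y) f(y) m′(y) dy` is well
defined (absolutely convergent integral), continuous on `[0,1]` with `h(0) = h(1) = 0`,
twice continuously differentiable on `(0,1)`, and solves `L h = −f` on `(0,1)`. -/
theorem green_operator_solves_dirichlet_problem
    (γ : ℝ) (f : ℝ → ℝ) (hf : ContinuousOn f (Set.Icc 0 1)) :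
    (∀ x ∈ Set.Icc (0 : ℝ) 1,
        IntervalIntegrable (fun y => gFn γ x y * f y * mDens γ y) volume 0 1)
    ∧ ContinuousOn (greenOp γ f) (Set.Icc 0 1)
    ∧ greenOp γ f 0 = 0 ∧ greenOp γ f 1 = 0
    ∧ ContDiffOn ℝ 2 (greenOp γ f) (Set.Ioo 0 1)
    ∧ ∀ x ∈ Set.Ioo (0 : ℝ) 1,
        x * (1 - x) * deriv (deriv (greenOp γ f)) x
          + γ * x * (1 - x) * deriv (greenOp γ f) x = -f x := by
  obtain ⟨M, hM⟩ := (isCompact_Icc (a := (0:ℝ)) (b := 1)).exists_bound_of_continuousOn hf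
  have hM' : ∀ y ∈ Set.Icc (0:ℝ) 1, |f y| ≤ M := fun y hy => hM y hy
  -- pieces about derivatives
  have hd1 : ∀ x ∈ Set.Ioo (0:ℝ) 1, deriv (greenOp γ f) x = Gfun γ f x :=
    fun x hx => (greenOp_hasDerivAt γ hf hM' hx).deriv
  have hd2 : ∀ x ∈ Set.Ioo (0:ℝ) 1, deriv (deriv (greenOp γ f)) x = Gfun2 γ f x := by
    intro x hx
    have hev : deriv (greenOp γ f) =ᶠ[nhds x] Gfun γ f := by
      filter_upwards [Ioo_mem_nhds hx.1 hx.2] with z hz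
      exact hd1 z hz
    rw [hev.deriv_eq]
    exact (Gfun_hasDerivAt γ hf hM' hx).deriv
  have hcontA : ContinuousOn (Aint γ f) (Set.Ioo 0 1) := fun x hx =>
    ((Aint_hasDerivAt γ hf hM' hx).continuousAt).continuousWithinAt
  have hcontB : ContinuousOn (Bint γ f) (Set.Ioo 0 1) := fun x hx =>
    ((Bint_hasDerivAt γ hf hM' hx).continuousAt).continuousWithinAt
  have hcontG2 : ContinuousOn (Gfun2 γ f) (Set.Ioo 0 1) := by
    apply ContinuousOn.div_const
    apply ContinuousOn.add
    · exact ((continuous_const.mul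
        (Real.continuous_exp.comp (continuous_const.mul continuous_id).neg)).continuousOn.mul
        (hcontB.sub hcontA))
    · apply ContinuousOn.mul
      · exact (Real.continuous_exp.comp (continuous_const.mul continuous_id).neg).continuousOn
      · apply ContinuousOn.sub
        · exact (((continuous_const.sub (sFn_continuous γ)).continuousOn.mul
            (hf.mono Set.Ioo_subset_Icc_self)).mul (mDens_continuousOn γ)).neg
        · exact ((sFn_continuous γ).continuousOn.mul
            (hf.mono Set.Ioo_subset_Icc_self)).mul (mDens_continuousOn γ)
  have hcd : ContDiffOn ℝ 2 (greenOp γ f) (Set.Ioo 0 1) := by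
    rw [show (2 : WithTop ℕ∞) = 1 + 1 from rfl,
      contDiffOn_succ_iff_deriv_of_isOpen isOpen_Ioo]
    refine ⟨fun x hx => ((greenOp_hasDerivAt γ hf hM' hx).differentiableAt).differentiableWithinAt,
      by simp, ?_⟩
    apply ContDiffOn.congr (f := Gfun γ f) _ hd1
    rw [show (1 : WithTop ℕ∞) = 0 + 1 from rfl,
      contDiffOn_succ_iff_deriv_of_isOpen isOpen_Ioo]
    refine ⟨fun x hx => ((Gfun_hasDerivAt γ hf hM' hx).differentiableAt).differentiableWithinAt,
      by simp, ?_⟩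
    rw [contDiffOn_zero]
    apply ContinuousOn.congr hcontG2
    intro x hx
    exact (Gfun_hasDerivAt γ hf hM' hx).deriv
  refine ⟨fun x hx => main_integrable γ hf hM' hx le_rfl zero_le_one le_rfl,
    greenOp_continuousOn γ hf hM', greenOp_zero γ f, greenOp_one γ f, hcd, ?_⟩
  intro x hx
  rw [hd1 x hx, hd2 x hx]
  have hx0 : x ≠ 0 := ne_of_gt hx.1
  have hx1 : (1:ℝ) - x ≠ 0 := by have := hx.2; intro h; linarith
  have hs1 : sFn γ 1 ≠ 0 := ne_of_gt (sFn_one_pos γ)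
  have hE : Real.exp (-(γ * x)) * Real.exp (γ * x) = 1 := by
    rw [← Real.exp_add]; simp
  simp only [Gfun, Gfun2, mDens]
  field_simp
  have hE'' : Real.exp (-(x * γ)) * Real.exp (x * γ) = 1 := by
    rw [← Real.exp_add]; simp
  linear_combination (-(f x * sFn γ 1)) * hE''
end
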